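/- arXiv:1904.01621 — 4 statements merged into one kernel-verified Lean document; each statement's English description precedes it below -/
import Mathlib

section
/- Let tilde-U^ı be the subalgebra of tilde-U generated by B_i = F_i + E_{τi} K̃_i' and k̃_i = K̃_i K̃_{τi}' for i ∈ I, where τ is a Cartan involution with c_{i,τi} = 0. Then for every i with τi = i, the element k̃_i is central in tilde-U^ı, and for every i with τi ≠ i, the element k̃_i k̃_{τi} is central in tilde-U^ı. -/
/-- Let `tilde-U^ı` be the subalgebra of the (Drinfeld-double-type) quantum
group `tilde-U` generated by `B i = F i + E (τ i) * K' i` and `k̃ i = K i * K' (τ i)` for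
`i ∈ I`, where `τ` is a Cartan involution with `c i (τ i) = 0`.  Then for every `i` with
`τ i = i` the element `k̃ i` is central in `tilde-U^ı`, and for every `i` with `τ i ≠ i` the
element `k̃ i * k̃ (τ i)` is central in `tilde-U^ı`. -/
theorem ktilde_central_in_iQuantumGroup
    {R A I : Type*} [CommRing R] [Ring A] [Algebra R A] [DecidableEq I]
    (v : Rˣ) (c : I → I → ℤ) (τ : I → I)
    (hcsym : ∀ i j, c i j = c j i)
    (hτ : ∀ i, τ (τ i) = i)
    (hcττ : ∀ i j, c (τ i) (τ j) = c i j)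
    (hciτ : ∀ i, c i (τ i) = 0)
    (E F K K' Kinv K'inv : I → A)
    (hEF : ∀ i j, ((v : R) - ((v⁻¹ : Rˣ) : R)) • (E i * F j - F j * E i)
      = if i = j then K i - K' i else 0)
    (hKK : ∀ i j, K i * K j = K j * K i)
    (hKK' : ∀ i j, K i * K' j = K' j * K i)
    (hK'K' : ∀ i j, K' i * K' j = K' j * K' i)
    (hKE : ∀ i j, K i * E j = (((v ^ (c i j) : Rˣ)) : R) • (E j * K i))
    (hKF : ∀ i j, K i * F j = (((v ^ (-(c i j)) : Rˣ)) : R) • (F j * K i))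
    (hK'E : ∀ i j, K' i * E j = (((v ^ (-(c i j)) : Rˣ)) : R) • (E j * K' i))
    (hK'F : ∀ i j, K' i * F j = (((v ^ (c i j) : Rˣ)) : R) • (F j * K' i))
    (hKinv : ∀ i, K i * Kinv i = 1 ∧ Kinv i * K i = 1)
    (hK'inv : ∀ i, K' i * K'inv i = 1 ∧ K'inv i * K' i = 1) :
    ∀ i : I,
      (τ i = i → ∀ x ∈ Algebra.adjoin R
          (Set.range (fun j => F j + E (τ j) * K' j)
            ∪ Set.range (fun j => K j * K' (τ j))),
        Commute (K i * K' (τ i)) x) ∧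
      (τ i ≠ i → ∀ x ∈ Algebra.adjoin R
          (Set.range (fun j => F j + E (τ j) * K' j)
            ∪ Set.range (fun j => K j * K' (τ j))),
        Commute ((K i * K' (τ i)) * (K (τ i) * K' (τ (τ i)))) x) := by
  -- scalar notation
  set q : ℤ → R := fun n => ((v ^ n : Rˣ) : R) with hqdef
  have hqmul : ∀ m n : ℤ, q m * q n = q (m + n) := by
    intro m n; simp [hqdef, ← Units.val_mul, ← zpow_add]
  have hq0 : q 0 = 1 := by simp [hqdef]
  have hcτ : ∀ a b, c (τ a) b = c a (τ b) := by
    intro a b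
    conv_lhs => rw [← hτ b]
    rw [hcττ]
  -- z i * F j
  have hzF : ∀ i j, (K i * K' (τ i)) * F j
      = q (c i (τ j) - c i j) • (F j * (K i * K' (τ i))) := by
    intro i j
    rw [mul_assoc, hK'F, mul_smul_comm, ← mul_assoc, hKF, smul_mul_assoc, smul_smul,
      hqmul, mul_assoc, hcτ]
    ring_nf
  -- z i * E (τ j)
  have hzE : ∀ i j, (K i * K' (τ i)) * E (τ j)
      = q (c i (τ j) - c i j) • (E (τ j) * (K i * K' (τ i))) := by
    intro i j
    rw [mul_assoc, hK'E, mul_smul_comm, ← mul_assoc, hKE, smul_mul_assoc, smul_smul,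
      hqmul, mul_assoc, hcττ]
    ring_nf
  -- z i commutes with K' j
  have hzK' : ∀ i j, (K i * K' (τ i)) * K' j = K' j * (K i * K' (τ i)) := by
    intro i j
    rw [mul_assoc, hK'K' (τ i) j, ← mul_assoc, hKK' i j, mul_assoc]
  -- z i * B j
  have hzB : ∀ i j, (K i * K' (τ i)) * (F j + E (τ j) * K' j)
      = q (c i (τ j) - c i j) • ((F j + E (τ j) * K' j) * (K i * K' (τ i))) := by
    intro i j
    have h2 : (K i * K' (τ i)) * (E (τ j) * K' j)
        = q (c i (τ j) - c i j) • (E (τ j) * K' j * (K i * K' (τ i))) := by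
      rw [← mul_assoc, hzE, smul_mul_assoc, mul_assoc, hzK', ← mul_assoc]
    rw [mul_add, hzF, h2, add_mul, smul_add]
  -- z i commutes with k j
  have hzk : ∀ i j, Commute (K i * K' (τ i)) (K j * K' (τ j)) := by
    intro i j
    have h1 : Commute (K i) (K j) := hKK i j
    have h2 : Commute (K' (τ i)) (K j) := (hKK' j (τ i)).symm
    have h3 : Commute (K i) (K' (τ j)) := hKK' i (τ j)
    have h4 : Commute (K' (τ i)) (K' (τ j)) := hK'K' (τ i) (τ j)
    exact (h1.mul_left h2).mul_right (h3.mul_left h4)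
  intro i
  constructor
  · intro hii x hx
    have hB : ∀ j, Commute (K i * K' (τ i)) (F j + E (τ j) * K' j) := by
      intro j
      have he : c i (τ j) - c i j = 0 := by
        rw [← hcτ, hii, sub_self]
      unfold Commute SemiconjBy
      rw [hzB, he, hq0, one_smul]
    induction hx using Algebra.adjoin_induction with
    | mem y hy =>
        rcases hy with ⟨j, rfl⟩ | ⟨j, rfl⟩
        · exact hB j
        · exact hzk i j
    | algebraMap r => exact (Algebra.commutes r _).symm
    | add a b _ _ ha hb => exact ha.add_right hb
    | mul a b _ _ ha hb => exact ha.mul_right hb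
  · intro hii x hx
    have hB : ∀ j, Commute ((K i * K' (τ i)) * (K (τ i) * K' (τ (τ i)))) (F j + E (τ j) * K' j) := by
      intro j
      unfold Commute SemiconjBy
      rw [mul_assoc, hzB (τ i) j, mul_smul_comm, ← mul_assoc, hzB i j, smul_mul_assoc,
        smul_smul, hqmul, hcτ, hcτ, hτ]
      have h0 : c i j - c i (τ j) + (c i (τ j) - c i j) = 0 := by ring
      rw [h0, hq0, one_smul, mul_assoc]
    induction hx using Algebra.adjoin_induction with
    | mem y hy =>
        rcases hy with ⟨j, rfl⟩ | ⟨j, rfl⟩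
        · exact hB j
        · exact ((hzk i j).mul_left (hzk (τ i) j))
    | algebraMap r => exact (Algebra.commutes r _).symm
    | add a b _ _ ha hb => exact ha.add_right hb
    | mul a b _ _ ha hb => exact ha.mul_right hb
end

section
/- Let Q be an acyclic quiver and ℓ a sink of Q. For any indecomposable representation L of Q over a field k with L not isomorphic to the simple S_ℓ, the reflected representation F_ℓ^+(L) at the sink ℓ is indecomposable with dimension vector s_ℓ(dim L), where s_ℓ is the simple reflection at ℓ; and F_ℓ^+(S_ℓ) = 0. -/
/-- A representation `(M, f)` of a quiver with vertices `V`, arrows `A` and source/target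
maps `s`, `t` is indecomposable: it is nonzero, and every idempotent endomorphism is `0`
or the identity. -/
def QuiverRep.Indecomposable (k : Type*) [Field k] {V A : Type*} (s t : A → V)
    (M : V → Type*) [∀ v, AddCommGroup (M v)] [∀ v, Module k (M v)]
    (f : ∀ a, M (s a) →ₗ[k] M (t a)) : Prop :=
  (¬ ∀ v, Subsingleton (M v)) ∧
    ∀ φ : ∀ v, M v →ₗ[k] M v,
      (∀ a x, φ (t a) (f a x) = f a (φ (s a) x)) →
      (∀ v x, φ v (φ v x) = φ v x) →
      (∀ v, φ v = 0) ∨ (∀ v, φ v = LinearMap.id)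

/-- A representation is isomorphic to the simple representation `S_ℓ` concentrated at the
vertex `ℓ`. -/
def QuiverRep.IsoSimpleAt (k : Type*) [Field k] {V : Type*} (ℓ : V)
    (M : V → Type*) [∀ v, AddCommGroup (M v)] [∀ v, Module k (M v)] : Prop :=
  (∀ v, v ≠ ℓ → Subsingleton (M v)) ∧ Nonempty (M ℓ ≃ₗ[k] k)

section QRaux

variable (k : Type*) [Field k] {V : Type*} (F : V → Type*)

/-- Transport along equal vertices, as a linear equivalence. -/
def QR.castLE [∀ v, AddCommGroup (F v)] [∀ v, Module k (F v)] {u v : V} (h : u = v) :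
    F u ≃ₗ[k] F v := by subst h; exact LinearEquiv.refl k (F u)

lemma QR.castLE_apply [∀ v, AddCommGroup (F v)] [∀ v, Module k (F v)] {u v : V}
    (h : u = v) (x : F u) :
    QR.castLE k F h x = cast (congrArg F h) x := by subst h; rfl

lemma QR.cast_commL [∀ v, AddCommGroup (F v)] [∀ v, Module k (F v)]
    (ψ : ∀ v, F v →ₗ[k] F v) {u v : V} (h : u = v) (x : F u) :
    ψ v (cast (congrArg F h) x) = cast (congrArg F h) (ψ u x) := by subst h; rfl

lemma QR.cast_cast {u v : V} (h : u = v) (x : F v) :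
    cast (congrArg F h) (cast (congrArg F h.symm) x) = x := by subst h; rfl

lemma QR.cast_eq_zero [∀ v, AddCommGroup (F v)] {u v : V} (h : u = v) (x : F u) :
    cast (congrArg F h) x = 0 ↔ x = 0 := by subst h; simp

lemma QR.cast_inj {u v : V} (h : u = v) {x y : F u} :
    cast (congrArg F h) x = cast (congrArg F h) y ↔ x = y := by subst h; simp

/-- Build an endomorphism family with a prescribed value at `ℓ` and elsewhere. -/
lemma QR.mkEndo [DecidableEq V] [∀ v, AddCommGroup (F v)] [∀ v, Module k (F v)] (ℓ : V)
    (q : F ℓ →ₗ[k] F ℓ) (r : ∀ v, v ≠ ℓ → (F v →ₗ[k] F v)) :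
    ∃ φ : ∀ v, F v →ₗ[k] F v, φ ℓ = q ∧ ∀ v (h : v ≠ ℓ), φ v = r v h := by
  refine ⟨fun v => if h : v = ℓ then
      ((QR.castLE k F h.symm).toLinearMap ∘ₗ q ∘ₗ (QR.castLE k F h).toLinearMap)
    else r v h, ?_, ?_⟩
  · ext m
    simp [QR.castLE_apply]
  · intro v h
    simp only [dif_neg h]

end QRaux



/-- Let `Q` be an acyclic quiver and `ℓ` a sink of `Q` (no arrows start
at `ℓ`).  Let `L = (M, f)` be a representation of `Q` over a field `k` and let `N = (N, g)`
be the representation of the reflected quiver `s_ℓ Q` (source/target `s'`, `t'`) obtained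
from `L` by the Bernstein–Gelfand–Ponomarev reflection functor `F_ℓ⁺`: it agrees with `L`
away from `ℓ` (via the equivalences `e`), and at `ℓ` it is, via `ι`, the kernel of the
canonical map `⊕_{a : t a = ℓ} M (s a) → M ℓ`, with the reversed arrows acting by the
projections.  Then: if `L` is indecomposable and not isomorphic to `S_ℓ`, the reflected
representation `F_ℓ⁺ L` is indecomposable with dimension vector `s_ℓ (dim L)`; and
`F_ℓ⁺ S_ℓ = 0`. -/
theorem bgp_reflection_functor_indecomposable
    (k : Type*) [Field k] {V A : Type*} [DecidableEq V] [Fintype A]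
    (s t : A → V) (ℓ : V)
    (hsink : ∀ a, s a ≠ ℓ)
    (hacyclic : ∃ h : V → ℕ, ∀ a, h (s a) < h (t a))
    (M : V → Type*) [∀ v, AddCommGroup (M v)] [∀ v, Module k (M v)]
    [∀ v, FiniteDimensional k (M v)]
    (f : ∀ a, M (s a) →ₗ[k] M (t a))
    (s' t' : A → V)
    (hrev1 : ∀ a, ∀ _ : t a = ℓ, s' a = ℓ ∧ t' a = s a)
    (hrev2 : ∀ a, ∀ _ : t a ≠ ℓ, s' a = s a ∧ t' a = t a)
    (N : V → Type*) [∀ v, AddCommGroup (N v)] [∀ v, Module k (N v)]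
    [∀ v, FiniteDimensional k (N v)]
    (g : ∀ a, N (s' a) →ₗ[k] N (t' a))
    (e : ∀ v, v ≠ ℓ → (N v ≃ₗ[k] M v))
    (ι : N ℓ →ₗ[k] ((a : {a : A // t a = ℓ}) → M (s a.1)))
    (hι : Function.Injective ι)
    (hker : ∀ x : (a : {a : A // t a = ℓ}) → M (s a.1),
      x ∈ Set.range ι ↔
        (∑ a : {a : A // t a = ℓ}, cast (congrArg M a.2) (f a.1 (x a))) = 0)
    (hsq1 : ∀ a, ∀ h : t a ≠ ℓ, ∀ x : N (s' a),
      e (t a) h (cast (congrArg N (hrev2 a h).2) (g a x))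
        = f a (e (s a) (hsink a) (cast (congrArg N (hrev2 a h).1) x)))
    (hsq2 : ∀ a, ∀ h : t a = ℓ, ∀ x : N (s' a),
      e (s a) (hsink a) (cast (congrArg N (hrev1 a h).2) (g a x))
        = ι (cast (congrArg N (hrev1 a h).1) x) ⟨a, h⟩) :
    (QuiverRep.Indecomposable k s t M f → ¬ QuiverRep.IsoSimpleAt k ℓ M →
        QuiverRep.Indecomposable k s' t' N g ∧
        (∀ v, v ≠ ℓ → Module.finrank k (N v) = Module.finrank k (M v)) ∧
        (Module.finrank k (N ℓ) : ℤ)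
          = (∑ a : {a : A // t a = ℓ}, (Module.finrank k (M (s a.1)) : ℤ))
            - Module.finrank k (M ℓ))
    ∧ (QuiverRep.IsoSimpleAt k ℓ M → ∀ v, Subsingleton (N v)) := by

  classical
  -- the canonical map from the "in-box" at ℓ
  obtain ⟨Φ, hΦ⟩ : ∃ Φ : ((a : {a : A // t a = ℓ}) → M (s a.1)) →ₗ[k] M ℓ,
      ∀ x, Φ x = ∑ a : {a : A // t a = ℓ}, cast (congrArg M a.2) (f a.1 (x a)) := by
    refine ⟨∑ a : {a : A // t a = ℓ},
      (QR.castLE k M a.2).toLinearMap ∘ₗ f a.1 ∘ₗ LinearMap.proj a, fun x => ?_⟩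
    simp [QR.castLE_apply, LinearMap.sum_apply]
  have hkerΦ : ∀ x, Φ x = 0 ↔ x ∈ Set.range ι := by
    intro x; rw [hΦ]; exact (hker x).symm
  have hsingle : ∀ (j : {a : A // t a = ℓ}) (x : M (s j.1)),
      Φ (Pi.single j x) = cast (congrArg M j.2) (f j.1 x) := by
    intro j x
    rw [hΦ, Finset.sum_eq_single j]
    · rw [Pi.single_eq_same]
    · intro b _ hb
      rw [Pi.single_eq_of_ne hb, map_zero]
      exact (QR.cast_eq_zero M b.2 (0 : M (t b.1))).2 rfl
    · intro h; exact absurd (Finset.mem_univ j) h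
  -- surjectivity of Φ for indecomposable non-simple M
  have hsurjΦ : QuiverRep.Indecomposable k s t M f → ¬ QuiverRep.IsoSimpleAt k ℓ M →
      Function.Surjective Φ := by
    intro hM hns
    by_contra hnsurj
    obtain ⟨C, hC⟩ := Submodule.exists_isCompl (LinearMap.range Φ)
    set R := LinearMap.range Φ with hR
    set p : M ℓ →ₗ[k] M ℓ := C.subtype ∘ₗ Submodule.linearProjOfIsCompl C R hC.symm with hp
    have hp0 : ∀ x ∈ R, p x = 0 := by
      intro x hx
      have : Submodule.linearProjOfIsCompl C R hC.symm x = 0 :=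
        Submodule.linearProjOfIsCompl_apply_right hC.symm ⟨x, hx⟩
      simp [hp, this]
    have hpC : ∀ x ∈ C, p x = x := by
      intro x hx
      have : Submodule.linearProjOfIsCompl C R hC.symm x = ⟨x, hx⟩ :=
        Submodule.linearProjOfIsCompl_apply_left hC.symm ⟨x, hx⟩
      simp [hp, this]
    have hpp : ∀ x, p (p x) = p x := by
      intro x
      exact hpC _ (by simp [hp])
    obtain ⟨φ, hφℓ, hφne⟩ := QR.mkEndo k M ℓ p (fun v _ => 0)
    have hcommφ : ∀ a x, φ (t a) (f a x) = f a (φ (s a) x) := by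
      intro a x
      rw [hφne (s a) (hsink a), LinearMap.zero_apply, map_zero]
      by_cases h : t a = ℓ
      · have h1 : φ ℓ (cast (congrArg M h) (f a x)) = 0 := by
          rw [hφℓ]
          exact hp0 _ ⟨Pi.single ⟨a, h⟩ x, (hsingle ⟨a, h⟩ x).symm ▸ rfl⟩
        have h2 := QR.cast_commL k M φ h (f a x)
        rw [h2] at h1
        exact (QR.cast_eq_zero M h _).1 h1
      · rw [hφne (t a) h, LinearMap.zero_apply]
    have hidemφ : ∀ v x, φ v (φ v x) = φ v x := by
      intro v x
      by_cases h : v = ℓ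
      · subst h; rw [hφℓ]; exact hpp x
      · rw [hφne v h]; simp
    rcases hM.2 φ hcommφ hidemφ with h0 | hid
    · have hC0 : R = ⊤ := by
        have hCbot : C = ⊥ := by
          rw [Submodule.eq_bot_iff]
          intro c hc
          rw [← hpC c hc, ← hφℓ, h0 ℓ, LinearMap.zero_apply]
        have := hC.codisjoint.eq_top
        rwa [hCbot, sup_bot_eq] at this
      exact hnsurj (LinearMap.range_eq_top.1 hC0)
    · have hsub : ∀ v, v ≠ ℓ → Subsingleton (M v) := by
        intro v hv
        refine ⟨fun x y => ?_⟩
        have hx : x = (0 : M v →ₗ[k] M v) x := by rw [← hφne v hv, hid v]; rfl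
        have hy : y = (0 : M v →ₗ[k] M v) y := by rw [← hφne v hv, hid v]; rfl
        rw [hx, hy]; simp
      by_cases hd : Module.finrank k (M ℓ) = 1
      · refine hns ⟨hsub, ⟨LinearEquiv.ofFinrankEq _ _ ?_⟩⟩
        rw [hd, Module.finrank_self]
      · by_cases hd0 : Module.finrank k (M ℓ) = 0
        · refine hM.1 (fun v => ?_)
          by_cases h : v = ℓ
          · subst h; exact Module.finrank_zero_iff.1 hd0
          · exact hsub v h
        · -- dim ≥ 2 : split off a line
          haveI : Nontrivial (M ℓ) := by
            by_contra hnt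
            have : Subsingleton (M ℓ) := not_nontrivial_iff_subsingleton.1 hnt
            exact hd0 (Module.finrank_zero_iff.2 this)
          obtain ⟨x, hx⟩ := exists_ne (0 : M ℓ)
          obtain ⟨C', hC'⟩ := Submodule.exists_isCompl (k ∙ x)
          set W := (k ∙ x) with hW
          set q : M ℓ →ₗ[k] M ℓ := W.subtype ∘ₗ Submodule.linearProjOfIsCompl W C' hC' with hq
          have hqW : ∀ y ∈ W, q y = y := by
            intro y hy
            have : Submodule.linearProjOfIsCompl W C' hC' y = ⟨y, hy⟩ :=
              Submodule.linearProjOfIsCompl_apply_left hC' ⟨y, hy⟩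
            simp [hq, this]
          have hqC : ∀ y ∈ C', q y = 0 := by
            intro y hy
            have : Submodule.linearProjOfIsCompl W C' hC' y = 0 :=
              Submodule.linearProjOfIsCompl_apply_right hC' ⟨y, hy⟩
            simp [hq, this]
          obtain ⟨φ', hφ'ℓ, hφ'ne⟩ := QR.mkEndo k M ℓ q (fun v _ => 0)
          have hcommφ' : ∀ a y, φ' (t a) (f a y) = f a (φ' (s a) y) := by
            intro a y
            haveI := hsub (s a) (hsink a)
            have hy0 : y = 0 := Subsingleton.elim y 0
            rw [hy0, map_zero, map_zero, map_zero, map_zero]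
          have hidemφ' : ∀ v y, φ' v (φ' v y) = φ' v y := by
            intro v y
            by_cases h : v = ℓ
            · subst h; rw [hφ'ℓ]
              exact hqW _ (by simp [hq])
            · rw [hφ'ne v h]; simp
          rcases hM.2 φ' hcommφ' hidemφ' with h0' | hid'
          · have : q x = x := hqW x (Submodule.mem_span_singleton_self x)
            rw [← hφ'ℓ, h0' ℓ, LinearMap.zero_apply] at this
            exact hx this.symm
          · -- q = id forces C' = ⊥, so M ℓ = W has dim 1
            have hC'bot : C' = ⊥ := by
              rw [Submodule.eq_bot_iff]
              intro c hc
              have h1 : q c = 0 := hqC c hc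
              rw [← hφ'ℓ, hid' ℓ] at h1
              exact h1
            have hWtop : W = ⊤ := by
              have := hC'.codisjoint.eq_top
              rwa [hC'bot, sup_bot_eq] at this
            apply hd
            rw [← finrank_top k (M ℓ), ← hWtop]
            exact finrank_span_singleton hx
  constructor
  · intro hM hns
    have hsurj := hsurjΦ hM hns
    -- dimension bookkeeping
    have hrangeι : LinearMap.range ι = LinearMap.ker Φ := by
      ext x
      rw [LinearMap.mem_ker, hkerΦ x]
      simp [LinearMap.mem_range, Set.mem_range]
    have hNℓ : Module.finrank k (N ℓ) = Module.finrank k (LinearMap.ker Φ) := by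
      have h1 := (LinearEquiv.ofInjective ι hι).finrank_eq
      rwa [hrangeι] at h1
    have hrn := LinearMap.finrank_range_add_finrank_ker Φ
    rw [LinearMap.range_eq_top.2 hsurj, finrank_top] at hrn
    have hpi : Module.finrank k ((a : {a : A // t a = ℓ}) → M (s a.1))
        = ∑ a : {a : A // t a = ℓ}, Module.finrank k (M (s a.1)) :=
      Module.finrank_pi_fintype k
    rw [hpi] at hrn
    refine ⟨⟨?_, ?_⟩, fun v h => (e v h).finrank_eq, by rw [hNℓ, ← Nat.cast_sum]; omega⟩
    · -- N is nonzero
      intro hall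
      apply hM.1
      have hMsub : ∀ v, v ≠ ℓ → Subsingleton (M v) := by
        intro v h
        haveI := hall v
        exact Equiv.subsingleton (e v h).symm.toEquiv
      have hsum0 : ∑ a : {a : A // t a = ℓ}, Module.finrank k (M (s a.1)) = 0 :=
        Finset.sum_eq_zero fun a _ => Module.finrank_zero_iff.2 (hMsub (s a.1) (hsink a.1))
      have hker0 : Module.finrank k (LinearMap.ker Φ) = 0 := by
        rw [← hNℓ]
        exact Module.finrank_zero_iff.2 (hall ℓ)
      have hr0 : Module.finrank k (M ℓ) = 0 := by omega
      have hMℓ : Subsingleton (M ℓ) := (Module.finrank_zero_iff (R := k)).1 hr0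
      intro v
      by_cases h : v = ℓ
      · rw [h]; exact hMℓ
      · exact hMsub v h
    · -- idempotent endomorphisms of N are trivial
      intro ψ hcomm hidem
      obtain ⟨Ψ, hΨ⟩ : ∃ Ψ : ((a : {a : A // t a = ℓ}) → M (s a.1)) →ₗ[k]
          ((a : {a : A // t a = ℓ}) → M (s a.1)),
          ∀ x b, Ψ x b
            = e (s b.1) (hsink b.1) (ψ (s b.1) ((e (s b.1) (hsink b.1)).symm (x b))) :=
        ⟨LinearMap.pi (fun b => (e (s b.1) (hsink b.1)).toLinearMap ∘ₗ ψ (s b.1) ∘ₗ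
          (e (s b.1) (hsink b.1)).symm.toLinearMap ∘ₗ LinearMap.proj b), fun x b => rfl⟩
      -- the key intertwining identity
      have hιψ : ∀ z, ι (ψ ℓ z) = Ψ (ι z) := by
        intro z
        funext b
        rw [hΨ]
        have e1 := hsq2 b.1 b.2 (cast (congrArg N (hrev1 b.1 b.2).1.symm) z)
        rw [QR.cast_cast N (hrev1 b.1 b.2).1 z] at e1
        have e2 := hsq2 b.1 b.2 (cast (congrArg N (hrev1 b.1 b.2).1.symm) (ψ ℓ z))
        rw [QR.cast_cast N (hrev1 b.1 b.2).1 (ψ ℓ z)] at e2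
        rw [← e2, ← e1, LinearEquiv.symm_apply_apply]
        congr 1
        rw [QR.cast_commL k N ψ (hrev1 b.1 b.2).2
          (g b.1 (cast (congrArg N (hrev1 b.1 b.2).1.symm) z)),
          hcomm b.1 (cast (congrArg N (hrev1 b.1 b.2).1.symm) z),
          QR.cast_commL k N ψ (hrev1 b.1 b.2).1.symm z]
      have hΨker : ∀ w, Φ w = 0 → Φ (Ψ w) = 0 := by
        intro w hw
        obtain ⟨z, hz⟩ := (hkerΦ w).1 hw
        rw [← hz, ← hιψ z]
        exact (hkerΦ _).2 ⟨ψ ℓ z, rfl⟩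
      obtain ⟨σ, hσ⟩ := Φ.exists_rightInverse_of_surjective (LinearMap.range_eq_top.2 hsurj)
      set φℓ : M ℓ →ₗ[k] M ℓ := Φ ∘ₗ Ψ ∘ₗ σ with hφℓdef
      have hφℓkey : ∀ w, φℓ (Φ w) = Φ (Ψ w) := by
        intro w
        have h0 : Φ (σ (Φ w)) = Φ w := by
          have := LinearMap.congr_fun hσ (Φ w)
          simpa using this
        have h1 : Φ (σ (Φ w) - w) = 0 := by rw [map_sub, sub_eq_zero, h0]
        have h2 := hΨker _ h1
        rw [map_sub, map_sub, sub_eq_zero] at h2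
        simpa [hφℓdef] using h2
      obtain ⟨φ, hφl, hφne⟩ := QR.mkEndo k M ℓ φℓ
        (fun v h => (e v h).toLinearMap ∘ₗ ψ v ∘ₗ (e v h).symm.toLinearMap)
      have hφne' : ∀ v (h : v ≠ ℓ) x, φ v x = e v h (ψ v ((e v h).symm x)) := by
        intro v h x; rw [hφne v h]; rfl
      have hΨsingle : ∀ (j : {a : A // t a = ℓ}) (y : M (s j.1)),
          Ψ (Pi.single j y) = Pi.single j
            (e (s j.1) (hsink j.1) (ψ (s j.1) ((e (s j.1) (hsink j.1)).symm y))) := by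
        intro j y
        funext b
        rw [hΨ]
        by_cases hb : b = j
        · subst hb
          rw [Pi.single_eq_same, Pi.single_eq_same]
        · rw [Pi.single_eq_of_ne hb, Pi.single_eq_of_ne hb]
          simp
      have hφcomm : ∀ a x, φ (t a) (f a x) = f a (φ (s a) x) := by
        intro a x
        rw [hφne' (s a) (hsink a) x]
        by_cases h : t a = ℓ
        · refine (QR.cast_inj M h).1 ?_
          rw [← QR.cast_commL k M φ h (f a x), hφl, ← hsingle ⟨a, h⟩ x, hφℓkey,
            hΨsingle ⟨a, h⟩ x, hsingle ⟨a, h⟩]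
        · have e1 := hsq1 a h (cast (congrArg N (hrev2 a h).1.symm)
            ((e (s a) (hsink a)).symm x))
          rw [QR.cast_cast N (hrev2 a h).1 ((e (s a) (hsink a)).symm x),
            LinearEquiv.apply_symm_apply] at e1
          have step2 : (e (t a) h).symm (f a x)
              = cast (congrArg N (hrev2 a h).2)
                  (g a (cast (congrArg N (hrev2 a h).1.symm) ((e (s a) (hsink a)).symm x))) := by
            rw [← e1, LinearEquiv.symm_apply_apply]
          have e2 := hsq1 a h (ψ (s' a) (cast (congrArg N (hrev2 a h).1.symm)
            ((e (s a) (hsink a)).symm x)))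
          calc φ (t a) (f a x)
              = e (t a) h (ψ (t a) ((e (t a) h).symm (f a x))) := hφne' (t a) h (f a x)
            _ = e (t a) h (cast (congrArg N (hrev2 a h).2)
                  (ψ (t' a) (g a (cast (congrArg N (hrev2 a h).1.symm)
                    ((e (s a) (hsink a)).symm x))))) := by
                rw [step2, QR.cast_commL k N ψ (hrev2 a h).2]
            _ = e (t a) h (cast (congrArg N (hrev2 a h).2)
                  (g a (ψ (s' a) (cast (congrArg N (hrev2 a h).1.symm)
                    ((e (s a) (hsink a)).symm x))))) := by
                rw [hcomm a]
            _ = f a (e (s a) (hsink a) (cast (congrArg N (hrev2 a h).1)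
                  (ψ (s' a) (cast (congrArg N (hrev2 a h).1.symm)
                    ((e (s a) (hsink a)).symm x))))) := e2
            _ = f a (e (s a) (hsink a) (ψ (s a) ((e (s a) (hsink a)).symm x))) := by
                rw [← QR.cast_commL k N ψ (hrev2 a h).1,
                  QR.cast_cast N (hrev2 a h).1 ((e (s a) (hsink a)).symm x)]
      have hΨΨ : ∀ w, Ψ (Ψ w) = Ψ w := by
        intro w
        funext b
        rw [hΨ, hΨ, LinearEquiv.symm_apply_apply, hidem (s b.1)]
      have hφℓidem : ∀ m, φℓ (φℓ m) = φℓ m := by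
        intro m
        obtain ⟨w, rfl⟩ := hsurj m
        rw [hφℓkey, hφℓkey, hΨΨ w]
      have hφidem : ∀ v x, φ v (φ v x) = φ v x := by
        intro v x
        by_cases h : v = ℓ
        · refine (QR.cast_inj M h).1 ?_
          rw [← QR.cast_commL k M φ h (φ v x), ← QR.cast_commL k M φ h x, hφl]
          exact hφℓidem _
        · have hv := hφne' v h
          rw [hv (φ v x), hv x, LinearEquiv.symm_apply_apply, hidem v ((e v h).symm x)]
      rcases hM.2 φ hφcomm hφidem with h0 | hid
      · left
        have hψ0 : ∀ v (h : v ≠ ℓ), ψ v = 0 := by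
          intro v h
          ext z
          have h1 : φ v (e v h z) = 0 := by rw [h0 v]; rfl
          rw [hφne' v h, LinearEquiv.symm_apply_apply] at h1
          simpa using (e v h).map_eq_zero_iff.1 h1
        have hℓ0 : ∀ z : N ℓ, ψ ℓ z = 0 := by
          intro z
          apply hι
          rw [map_zero, hιψ z]
          funext b
          rw [hΨ, hψ0 (s b.1) (hsink b.1)]
          simp
        intro v
        by_cases h : v = ℓ
        · ext z
          rw [LinearMap.zero_apply]
          refine (QR.cast_eq_zero N h _).1 ?_
          rw [← QR.cast_commL k N ψ h z, hℓ0]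
        · exact hψ0 v h
      · right
        have hψid : ∀ v (h : v ≠ ℓ) z, ψ v z = z := by
          intro v h z
          have h1 : φ v (e v h z) = e v h z := by rw [hid v]; rfl
          rw [hφne' v h, LinearEquiv.symm_apply_apply] at h1
          exact (e v h).injective h1
        have hℓid : ∀ z : N ℓ, ψ ℓ z = z := by
          intro z
          apply hι
          rw [hιψ z]
          funext b
          rw [hΨ, hψid (s b.1) (hsink b.1), LinearEquiv.apply_symm_apply]
        intro v
        ext z
        rw [LinearMap.id_apply]
        by_cases h : v = ℓ
        · refine (QR.cast_inj N h).1 ?_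
          rw [← QR.cast_commL k N ψ h z, hℓid]
        · exact hψid v h z
  · -- the simple case
    intro hiso v
    by_cases hv : v = ℓ
    · subst hv
      haveI : ∀ a : {a : A // t a = v}, Subsingleton (M (s a.1)) :=
        fun a => hiso.1 _ (hsink a.1)
      exact ⟨fun x y => hι (Subsingleton.elim _ _)⟩
    · haveI := hiso.1 v hv
      exact Equiv.subsingleton (e v hv).toEquiv
end

section
/- Let W be a finite Weyl group of simply-laced type with longest element w₀, and τ a diagram involution. If w₀ = s_{j_1}⋯s_{j_N} is a reduced expression obtained by grouping: whenever τ(i) ≠ i the letters s_i and s_{τi} appear in adjacent commuting pairs, then the corresponding product of elements bs_i (bs_i = s_i or s_i s_{τi}) is a reduced expression of w₀ in the restricted Weyl group W_τ with respect to its Coxeter generators {bs_i}. -/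
namespace SXAux

open CoxeterSystem List

variable {B W : Type*} [Group W] {M : CoxeterMatrix B} (cs : CoxeterSystem M W)

local prefix:100 "s" => cs.simple
local prefix:100 "π" => cs.wordProd
local prefix:100 "ℓ" => cs.length
local prefix:100 "ris" => cs.rightInvSeq

open scoped Classical

/-- The sign-flip involution on `W × ℤˣ` associated to a simple reflection. -/
noncomputable def pfun (i : B) : W × ℤˣ → W × ℤˣ :=
  fun x => (s i * x.1 * s i, if x.1 = s i then -x.2 else x.2)

theorem pfun_involutive (i : B) : Function.Involutive (pfun cs i) := by
  rintro ⟨t, ε⟩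
  simp only [pfun]
  have h1 : s i * (s i * t * s i) * s i = t := by
    simp [mul_assoc]
  have h2 : (s i * t * s i = s i) ↔ t = s i := by
    constructor
    · intro h
      have := congrArg (fun z => s i * z * s i) h
      simpa [mul_assoc] using this
    · intro h; simp [h]
  by_cases h : t = s i <;> simp [h1, h2, h]

/-- The permutation version. -/
noncomputable def pperm (i : B) : Equiv.Perm (W × ℤˣ) := (pfun_involutive cs i).toPerm

@[simp] theorem pperm_apply (i : B) (x : W × ℤˣ) : pperm cs i x = pfun cs i x := rfl

/-- The word `[i, j, i, j, ...]` of length `2 * m`. -/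
def dword (i j : B) : ℕ → List B
  | 0 => []
  | m + 1 => i :: j :: dword i j m

@[simp] theorem dword_length (i j : B) (m : ℕ) : (dword i j m).length = 2 * m := by
  induction m with
  | zero => rfl
  | succ m ih => simp [dword, ih]; omega

theorem dword_prod (i j : B) (m : ℕ) : π (dword i j m) = (s i * s j) ^ m := by
  induction m with
  | zero => simp [dword]
  | succ m ih => rw [dword, wordProd_cons, wordProd_cons, ih, pow_succ', mul_assoc]

theorem dword_map_prod {G : Type*} [Monoid G] (f : B → G) (i j : B) (m : ℕ) :
    ((dword i j m).map f).prod = (f i * f j) ^ m := by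
  induction m with
  | zero => simp [dword]
  | succ m ih => simp [dword, ih, pow_succ', mul_assoc]

theorem dword_drop (i j : B) (m q : ℕ) (h : q ≤ m) :
    (dword i j m).drop (2 * q) = dword i j (m - q) := by
  induction q generalizing m with
  | zero => simp
  | succ q ih =>
    obtain ⟨m', rfl⟩ : ∃ m', m = m' + 1 := ⟨m - 1, by omega⟩
    have : 2 * (q + 1) = (2 * q) + 1 + 1 := by omega
    rw [this, dword]
    simp only [List.drop_succ_cons]
    rw [ih m' (by omega)]
    congr 1
    omega

theorem dword_drop_odd (i j : B) (m q : ℕ) (h : q < m) :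
    (dword i j m).drop (2 * q + 1) = j :: dword i j (m - q - 1) := by
  have h1 : (dword i j m).drop (2 * q + 1) = ((dword i j m).drop (2 * q)).drop 1 := by
    rw [List.drop_drop]
  rw [h1, dword_drop i j m q (by omega)]
  obtain ⟨r, hr⟩ : ∃ r, m - q = r + 1 := ⟨m - q - 1, by omega⟩
  rw [hr, dword]
  simp


section Dihedral

variable {i j : B} {m : ℕ}

theorem dword_get?_even {q : ℕ} (hq : q < m) : (dword i j m)[2*q]? = some i := by
  have h1 : (dword i j m)[2*q]? = ((dword i j m).drop (2*q))[0]? := by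
    simp [List.getElem?_drop]
  rw [h1, dword_drop i j m q hq.le]
  obtain ⟨r, hr⟩ : ∃ r, m - q = r + 1 := ⟨m - q - 1, by omega⟩
  rw [hr, dword]
  rfl

theorem dword_get?_odd {q : ℕ} (hq : q < m) : (dword i j m)[2*q+1]? = some j := by
  have h1 : (dword i j m)[2*q+1]? = ((dword i j m).drop (2*q+1))[0]? := by
    simp [List.getElem?_drop]
  rw [h1, dword_drop_odd i j m q hq]
  simp

theorem conj_helper {a b : W} (ha : a * a = 1) (hb : b * b = 1) :
    ∀ n : ℤ, b * (a*b) ^ n = (a*b) ^ (-n) * b := by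
  intro n
  have hbinv : b⁻¹ = b := inv_eq_of_mul_eq_one_right hb
  have hainv : a⁻¹ = a := inv_eq_of_mul_eq_one_right ha
  have h1 : b * (a*b) * b⁻¹ = (a*b)⁻¹ := by
    rw [hbinv, mul_inv_rev, hbinv, hainv]
    calc b * (a * b) * b = b * a * (b * b) := by group
    _ = b * a := by rw [hb, mul_one]
  have h2 : b * (a*b)^n * b⁻¹ = ((a*b)⁻¹)^n := by
    rw [← conj_zpow, h1]
  have h3 : ((a*b)⁻¹ : W)^n = (a*b)^(-n) := by
    rw [inv_zpow, zpow_neg]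
  calc b * (a*b)^n = b * (a*b)^n * b⁻¹ * b := by group
  _ = (a*b)^(-n) * b := by rw [h2, h3]

theorem dihedral_conj_even {a b : W} (ha : a * a = 1) (hb : b * b = 1) (E : ℤ) :
    (b * (a*b)^E)⁻¹ * a * (b * (a*b)^E) = (a*b)^(-(2*E+1)) * b := by
  have hbinv : b⁻¹ = b := inv_eq_of_mul_eq_one_right hb
  have hba : b * a = (a*b)⁻¹ := by
    have hainv : a⁻¹ = a := inv_eq_of_mul_eq_one_right ha
    rw [mul_inv_rev, hainv, hbinv]
  calc (b * (a*b)^E)⁻¹ * a * (b * (a*b)^E)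
      = ((a*b)^E)⁻¹ * (b⁻¹ * a) * (b * (a*b)^E) := by group
  _ = ((a*b)^E)⁻¹ * (b * a) * (b * (a*b)^E) := by rw [hbinv]
  _ = ((a*b)^E)⁻¹ * (b * a) * ((a*b)^(-E) * b) := by rw [conj_helper ha hb E]
  _ = (a*b)^(-E) * (a*b)⁻¹ * (a*b)^(-E) * b := by rw [hba, ← zpow_neg]; group
  _ = (a*b)^(-(2*E+1)) * b := by
      rw [← zpow_neg_one, ← zpow_add, ← zpow_add]
      congr 1
      ring

theorem dihedral_conj_odd {a b : W} (ha : a * a = 1) (hb : b * b = 1) (F : ℤ) :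
    ((a*b)^F)⁻¹ * b * ((a*b)^F) = (a*b)^(-(2*F)) * b := by
  calc ((a*b)^F)⁻¹ * b * ((a*b)^F)
      = ((a*b)^F)⁻¹ * (b * (a*b)^F) := by group
  _ = (a*b)^(-F) * ((a*b)^(-F) * b) := by rw [conj_helper ha hb F, zpow_neg]
  _ = (a*b)^(-(2*F)) * b := by
      rw [← mul_assoc, ← zpow_add]
      congr 2
      ring

/-- Closed form for the right inversion sequence of the word `(i j)^m`,
assuming `(s i * s j) ^ m = 1`. -/
theorem dword_ris_getD (hm : (s i * s j) ^ m = 1) {k : ℕ} (hk : k < 2 * m) :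
    (ris (dword i j m)).getD k 1 = (s i * s j) ^ (k+1) * s j := by
  have ha : s i * s i = 1 := cs.simple_mul_simple_self i
  have hb : s j * s j = 1 := cs.simple_mul_simple_self j
  have hmz : (s i * s j) ^ (m : ℤ) = 1 := by rw [zpow_natCast]; exact hm
  have hshift : ∀ A : ℤ, (s i * s j) ^ (A + 2*(m:ℤ)) = (s i * s j) ^ A := by
    intro A
    rw [zpow_add, two_mul, zpow_add, hmz, one_mul, mul_one]
  have hknat : ((s i * s j : W)) ^ (k+1) = (s i * s j) ^ ((k:ℤ)+1) := by
    rw [← zpow_natCast]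
    congr 1
  rw [cs.getD_rightInvSeq, hknat]
  rcases Nat.even_or_odd k with ⟨q, hq⟩ | ⟨q, hq⟩
  · -- k = 2*q
    have hq2 : k = 2*q := by omega
    have hqm : q < m := by omega
    subst hq2
    rw [dword_get?_even hqm, dword_drop_odd i j m q hqm, wordProd_cons, dword_prod]
    simp only [Option.map_some, Option.getD_some]
    have hE : (s i * s j : W) ^ (m - q - 1) = (s i * s j) ^ (((m:ℤ) - q - 1)) := by
      rw [← zpow_natCast]
      congr 1
      omega
    rw [hE, dihedral_conj_even ha hb ((m:ℤ) - q - 1)]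
    congr 1
    have hA : ((2*q : ℕ) : ℤ) + 1 = (-(2*((m:ℤ) - q - 1)+1)) + 2*(m:ℤ) := by push_cast; ring
    rw [hA, hshift]
  · -- k = 2*q + 1
    have hq2 : k = 2*q + 1 := by omega
    have hqm : q < m := by omega
    subst hq2
    have hdrop : (dword i j m).drop (2*q+1+1) = dword i j (m - q - 1) := by
      have : 2*q+1+1 = 2*(q+1) := by omega
      rw [this, dword_drop i j m (q+1) (by omega)]
      congr 1
    rw [dword_get?_odd hqm, hdrop, dword_prod]
    simp only [Option.map_some, Option.getD_some]
    have hF : (s i * s j : W) ^ (m - q - 1) = (s i * s j) ^ (((m:ℤ) - q - 1)) := by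
      rw [← zpow_natCast]
      congr 1
      omega
    rw [hF, dihedral_conj_odd ha hb ((m:ℤ) - q - 1)]
    congr 1
    have hA : ((2*q+1 : ℕ) : ℤ) + 1 = (-(2*((m:ℤ) - q - 1))) + 2*(m:ℤ) := by push_cast; ring
    rw [hA, hshift]

end Dihedral

section SignRep

/-- Product formula for the sign representation along a word. -/
theorem prod_pperm_apply [DecidableEq W] (γ : List B) (t : W) (ε : ℤˣ) :
    (γ.map (pperm cs)).prod (t, ε)
      = (π γ * t * (π γ)⁻¹, (-1) ^ ((ris γ).count t) * ε) := by
  induction γ with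
  | nil => simp
  | cons i γ ih =>
    have hris : ris (i :: γ) = ((π γ)⁻¹ * s i * π γ) :: ris γ := rfl
    rw [List.map_cons, List.prod_cons, Equiv.Perm.mul_apply, ih]
    rw [pperm_apply]
    simp only [pfun]
    rw [hris, List.count_cons, wordProd_cons]
    have hcond : (π γ * t * (π γ)⁻¹ = s i) ↔ ((π γ)⁻¹ * s i * π γ = t) := by
      constructor
      · intro h; rw [← h]; group
      · intro h; rw [← h]; group
    refine Prod.ext ?_ ?_
    · show s i * (π γ * t * (π γ)⁻¹) * s i = (s i * π γ) * t * (s i * π γ)⁻¹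
      rw [mul_inv_rev, cs.inv_simple]
      group
    · show (if π γ * t * (π γ)⁻¹ = s i then -((-1) ^ ((ris γ).count t) * ε)
          else (-1) ^ ((ris γ).count t) * ε)
        = (-1) ^ ((ris γ).count t + if ((π γ)⁻¹ * s i * π γ) == t then 1 else 0) * ε
      by_cases h : π γ * t * (π γ)⁻¹ = s i
      · rw [if_pos h, if_pos (by exact beq_iff_eq.mpr (hcond.mp h))]
        rw [pow_succ, mul_neg_one, neg_mul]
      · rw [if_neg h, if_neg (by
          intro hc
          exact h (hcond.mpr (beq_iff_eq.mp hc)))]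
        rw [Nat.add_zero]

theorem pperm_liftable : M.IsLiftable (pperm cs) := by
  classical
  intro i j
  rcases Nat.eq_zero_or_pos (M i j) with h0 | hpos
  · rw [h0, pow_zero]
  · set m := M i j with hmdef
    have hm : (s i * s j) ^ m = 1 := cs.simple_mul_simple_pow i j
    have hprodperm : (pperm cs i * pperm cs j) ^ m = ((dword i j m).map (pperm cs)).prod :=
      (dword_map_prod (pperm cs) i j m).symm
    rw [hprodperm]
    ext ⟨t, ε⟩
    · rw [prod_pperm_apply, dword_prod, hm]
      simp
    · rw [prod_pperm_apply]
      have hsplit : ris (dword i j m)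
          = (ris (dword i j m)).take m ++ (ris (dword i j m)).drop m :=
        (List.take_append_drop m _).symm
      have hlen : (ris (dword i j m)).length = 2 * m := by
        rw [length_rightInvSeq, dword_length]
      have htd : (ris (dword i j m)).take m = (ris (dword i j m)).drop m := by
        apply List.ext_getElem
        · rw [List.length_take, List.length_drop, hlen]; omega
        · intro n h₁ h₂
          rw [List.length_take, hlen] at h₁
          have hn : n < m := lt_of_lt_of_le h₁ (min_le_left _ _)
          rw [List.getElem_take, List.getElem_drop]
          rw [← List.getD_eq_getElem _ 1, ← List.getD_eq_getElem _ 1]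
          rw [dword_ris_getD cs hm (by omega : n < 2*m),
              dword_ris_getD cs hm (by omega : m + n < 2*m)]
          congr 1
          conv_rhs => rw [show m + n + 1 = m + (n + 1) from by omega, pow_add, hm, one_mul]
      have hcount : (ris (dword i j m)).count t
          = 2 * ((ris (dword i j m)).drop m).count t := by
        nth_rw 1 [hsplit]
        rw [List.count_append, htd]
        omega
      rw [dword_prod, hm, hcount, pow_mul]
      simp

/-- The sign representation of the Coxeter group on `W × ℤˣ`. -/
noncomputable def Prep : W →* Equiv.Perm (W × ℤˣ) := cs.lift ⟨pperm cs, pperm_liftable cs⟩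

/-- The sign cocycle. -/
noncomputable def eta (w t : W) : ℤˣ := ((Prep cs w) (t, 1)).2

theorem Prep_simple (i : B) : Prep cs (s i) = pperm cs i :=
  cs.lift_apply_simple (pperm_liftable cs) i

theorem Prep_wordProd (γ : List B) : Prep cs (π γ) = (γ.map (pperm cs)).prod := by
  unfold CoxeterSystem.wordProd
  rw [MonoidHom.map_list_prod, List.map_map]
  congr 1
  apply List.map_congr_left
  intro i _
  exact Prep_simple cs i

theorem eta_wordProd [DecidableEq W] (γ : List B) (t : W) :
    eta cs (π γ) t = (-1) ^ ((ris γ).count t) := by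
  unfold eta
  rw [Prep_wordProd, prod_pperm_apply]
  simp

theorem Prep_apply (w t : W) (ε : ℤˣ) :
    Prep cs w (t, ε) = (w * t * w⁻¹, eta cs w t * ε) := by
  classical
  obtain ⟨γ, _, rfl⟩ := cs.exists_reduced_word' w
  rw [Prep_wordProd, prod_pperm_apply, eta_wordProd]

theorem eta_cocycle (x y t : W) :
    eta cs (x * y) t = eta cs y t * eta cs x (y * t * y⁻¹) := by
  have h1 : Prep cs (x * y) (t, 1) = (x * y * t * (x*y)⁻¹, eta cs (x*y) t * 1) :=
    Prep_apply cs (x*y) t 1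
  have h2 : Prep cs (x * y) (t, 1)
      = (x * (y*t*y⁻¹) * x⁻¹, eta cs x (y*t*y⁻¹) * (eta cs y t * 1)) := by
    rw [map_mul, Equiv.Perm.mul_apply, Prep_apply cs y t 1,
      Prep_apply cs x (y*t*y⁻¹) (eta cs y t * 1)]
  have h3 := congrArg Prod.snd (h1.symm.trans h2)
  simpa [mul_comm] using h3

theorem eta_one (t : W) : eta cs 1 t = 1 := by
  unfold eta
  rw [map_one]
  rfl

theorem eta_simple (i : B) (t : W) :
    eta cs (s i) t = if t = s i then -1 else 1 := by
  unfold eta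
  rw [Prep_simple, pperm_apply]
  rfl

end SignRep

section Eta

theorem length_lt_of_eta_neg {w t : W} (h : eta cs w t = -1) : ℓ (w * t) < ℓ w := by
  classical
  obtain ⟨γ, hγ, rfl⟩ := cs.exists_reduced_word' w
  rw [eta_wordProd] at h
  have hodd : Odd ((ris γ).count t) := by
    rcases Nat.even_or_odd ((ris γ).count t) with he | ho
    · exfalso
      rw [he.neg_one_pow] at h
      exact absurd h (by decide)
    · exact ho
  have hmem : t ∈ ris γ := by
    rw [← List.count_pos_iff]
    rcases hodd with ⟨c, hc⟩
    omega
  exact (cs.isRightInversion_of_mem_rightInvSeq hγ hmem).2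

theorem eta_refl_self {t : W} (ht : cs.IsReflection t) : eta cs t t = -1 := by
  obtain ⟨u, k, hts⟩ := ht
  have hdecomp : t = u * (s k * u⁻¹) := by rw [hts, mul_assoc]
  have hinner : u⁻¹ * t * (u⁻¹)⁻¹ = s k := by rw [hts]; group
  have h1 : (s k * u⁻¹) * t * (s k * u⁻¹)⁻¹ = s k := by
    rw [hts, mul_inv_rev, cs.inv_simple, inv_inv]
    have h2 : s k * u⁻¹ * (u * s k * u⁻¹) * (u * s k) = s k * s k * s k := by group
    rw [h2, cs.simple_mul_simple_self, one_mul]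
  have hAB : eta cs u⁻¹ t * eta cs u (s k) = 1 := by
    have h0 : eta cs (u * u⁻¹) t = 1 := by rw [mul_inv_cancel, eta_one]
    rw [eta_cocycle, hinner] at h0
    exact h0
  calc eta cs t t = eta cs (u * (s k * u⁻¹)) t := by rw [← hdecomp]
  _ = eta cs (s k * u⁻¹) t * eta cs u ((s k * u⁻¹) * t * (s k * u⁻¹)⁻¹) :=
      eta_cocycle cs u (s k * u⁻¹) t
  _ = eta cs (s k * u⁻¹) t * eta cs u (s k) := by rw [h1]
  _ = (eta cs u⁻¹ t * eta cs (s k) (u⁻¹ * t * (u⁻¹)⁻¹)) * eta cs u (s k) := by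
      rw [eta_cocycle cs (s k) u⁻¹ t]
  _ = (eta cs u⁻¹ t * -1) * eta cs u (s k) := by
      rw [hinner, eta_simple, if_pos rfl]
  _ = -1 := by rw [mul_neg_one, neg_mul, hAB]

theorem eta_neg_iff {t : W} (ht : cs.IsReflection t) (w : W) :
    eta cs w t = -1 ↔ ℓ (w * t) < ℓ w := by
  constructor
  · exact length_lt_of_eta_neg cs
  · intro hlt
    by_contra hne
    have h1 : eta cs w t = 1 := by
      rcases Int.units_eq_one_or (eta cs w t) with h | h
      · exact h
      · exact absurd h hne
    have hw : w = (w * t) * t := by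
      rw [mul_assoc, ht.mul_self, mul_one]
    have h2 : eta cs ((w * t) * t) t = eta cs t t * eta cs (w * t) (t * t * t⁻¹) :=
      eta_cocycle cs (w * t) t t
    rw [← hw, h1, eta_refl_self cs ht, ht.mul_self, one_mul, ht.inv] at h2
    have h3 : eta cs (w * t) t = -1 := by
      have := congrArg (fun z => (-1 : ℤˣ) * z) h2
      simpa using this.symm
    have h4 := length_lt_of_eta_neg cs h3
    rw [mul_assoc, ht.mul_self, mul_one] at h4
    omega

theorem eta_left_iff {t : W} (ht : cs.IsReflection t) (w : W) :
    eta cs w⁻¹ t = -1 ↔ ℓ (t * w) < ℓ w := by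
  rw [eta_neg_iff cs ht w⁻¹]
  have h1 : ℓ (w⁻¹ * t) = ℓ (t * w) := by
    rw [← cs.length_inv (w⁻¹ * t), mul_inv_rev, inv_inv, ht.inv]
  rw [h1, cs.length_inv w]

/-- The key exchange-type step lemma: multiplying on the right by a simple reflection
toggles exactly the left inversion `w * sᵢ * w⁻¹`. -/
theorem keystep {t : W} (ht : cs.IsReflection t) (w : W) (i : B)
    (hne : t ≠ w * s i * w⁻¹) :
    ℓ (t * (w * s i)) < ℓ (w * s i) ↔ ℓ (t * w) < ℓ w := by
  rw [← eta_left_iff cs ht, ← eta_left_iff cs ht]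
  have h1 : (w * s i)⁻¹ = s i * w⁻¹ := by rw [mul_inv_rev, cs.inv_simple]
  have h2 : eta cs (s i * w⁻¹) t = eta cs w⁻¹ t * eta cs (s i) (w⁻¹ * t * (w⁻¹)⁻¹) :=
    eta_cocycle cs (s i) w⁻¹ t
  have h3 : w⁻¹ * t * (w⁻¹)⁻¹ ≠ s i := by
    intro hc
    apply hne
    rw [← hc]
    group
  rw [h1, h2, eta_simple, if_neg (by rwa [inv_inv] at h3 ⊢), mul_one]

/-- The toggled inversion itself. -/
theorem keystep_self (w : W) (i : B) :
    ℓ ((w * s i * w⁻¹) * (w * s i)) < ℓ (w * s i) ↔ ¬ ℓ (w * s i) < ℓ w := by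
  have h1 : (w * s i * w⁻¹) * (w * s i) = w * (s i * s i) := by group
  rw [h1, cs.simple_mul_simple_self, mul_one]
  rcases cs.length_mul_simple w i with hc | hc <;> omega

end Eta

section Counting

variable [Finite W] (σ : W →* W)

/-- The set of σ-fixed left inversions of `w`. -/
def Sset (w : W) : Set W :=
  {t | cs.IsReflection t ∧ ℓ (t * w) < ℓ w ∧ σ t = t}

/-- The number of σ-fixed left inversions. -/
noncomputable def cc (w : W) : ℕ := (Sset cs σ w).ncard

/-- The master invariant: length plus number of σ-fixed left inversions. -/
noncomputable def mm (w : W) : ℕ := ℓ w + cc cs σ w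

theorem Sset_one : Sset cs σ 1 = ∅ := by
  ext t
  simp [Sset, mul_one]

theorem mm_one : mm cs σ 1 = 0 := by
  unfold mm cc
  rw [Sset_one, cs.length_one, Set.ncard_empty]

theorem Sset_mul_simple_subset (w : W) (i : B) :
    Sset cs σ (w * s i) ⊆ insert (w * s i * w⁻¹) (Sset cs σ w) := by
  rintro t ⟨htr, hlt, htf⟩
  by_cases h : t = w * s i * w⁻¹
  · exact Set.mem_insert_iff.mpr (Or.inl h)
  · exact Set.mem_insert_iff.mpr (Or.inr ⟨htr, (keystep cs htr w i h).mp hlt, htf⟩)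

theorem mm_mul_simple_le (w : W) (i : B) : mm cs σ (w * s i) ≤ mm cs σ w + 2 := by
  have hc : cc cs σ (w * s i) ≤ cc cs σ w + 1 :=
    le_trans (Set.ncard_le_ncard (Sset_mul_simple_subset cs σ w i) (Set.toFinite _))
      (Set.ncard_insert_le _ _)
  have hl : ℓ (w * s i) ≤ ℓ w + 1 := by
    rcases cs.length_mul_simple w i with h | h <;> omega
  unfold mm
  omega

theorem Sset_mul_simple_exact (w : W) (i : B) (hσw : σ w = w) (hσi : σ (s i) = s i)
    (hinc : ℓ (w * s i) = ℓ w + 1) :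
    Sset cs σ (w * s i) = insert (w * s i * w⁻¹) (Sset cs σ w)
      ∧ (w * s i * w⁻¹) ∉ Sset cs σ w := by
  have hurefl : cs.IsReflection (w * s i * w⁻¹) := (cs.isReflection_simple i).conj w
  have huσ : σ (w * s i * w⁻¹) = w * s i * w⁻¹ := by
    rw [map_mul, map_mul, map_inv, hσw, hσi]
  have huw : (w * s i * w⁻¹) * w = w * s i := by group
  have hnotmem : (w * s i * w⁻¹) ∉ Sset cs σ w := by
    rintro ⟨-, hlt, -⟩
    rw [huw, hinc] at hlt
    omega
  refine ⟨?_, hnotmem⟩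
  ext t
  constructor
  · rintro ⟨htr, hlt, htf⟩
    by_cases h : t = w * s i * w⁻¹
    · exact Set.mem_insert_iff.mpr (Or.inl h)
    · exact Set.mem_insert_iff.mpr (Or.inr ⟨htr, (keystep cs htr w i h).mp hlt, htf⟩)
  · intro hmem
    rcases Set.mem_insert_iff.mp hmem with h | ⟨htr, hlt, htf⟩
    · subst h
      refine ⟨hurefl, ?_, huσ⟩
      rw [(keystep_self cs w i), hinc]
      omega
    · by_cases h : t = w * s i * w⁻¹
      · exact absurd (h ▸ (⟨htr, hlt, htf⟩ : t ∈ Sset cs σ w)) hnotmem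
      · exact ⟨htr, (keystep cs htr w i h).mpr hlt, htf⟩

theorem mm_mul_simple_exact (w : W) (i : B) (hσw : σ w = w) (hσi : σ (s i) = s i)
    (hinc : ℓ (w * s i) = ℓ w + 1) :
    mm cs σ (w * s i) = mm cs σ w + 2 := by
  obtain ⟨heq, hnm⟩ := Sset_mul_simple_exact cs σ w i hσw hσi hinc
  have hc : cc cs σ (w * s i) = cc cs σ w + 1 := by
    unfold cc
    rw [heq, Set.ncard_insert_of_notMem hnm (Set.toFinite _)]
  unfold mm
  omega

theorem Sset_mul_pair_eq (w : W) (i j : B) (hij : (s i : W) * s j = s j * s i)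
    (hss : (s i : W) ≠ s j) (hσw : σ w = w) (hσi : σ (s i) = s j) (hσj : σ (s j) = s i) :
    Sset cs σ (w * (s i * s j)) = Sset cs σ w := by
  have hu12 : (w * s i * w⁻¹) ≠ (w * s j * w⁻¹) := by
    intro h
    exact hss (mul_left_cancel (mul_right_cancel h))
  have hσu1 : σ (w * s i * w⁻¹) = w * s j * w⁻¹ := by
    rw [map_mul, map_mul, map_inv, hσw, hσi]
  have hσu2 : σ (w * s j * w⁻¹) = w * s i * w⁻¹ := by
    rw [map_mul, map_mul, map_inv, hσw, hσj]
  have hconj2 : (w * s i) * s j * (w * s i)⁻¹ = w * s j * w⁻¹ := by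
    rw [mul_inv_rev, cs.inv_simple]
    have h1 : w * s i * s j * (s i * w⁻¹) = w * (s i * s j * s i) * w⁻¹ := by group
    have h2 : (s i : W) * s j * s i = s j := by
      rw [hij, mul_assoc, cs.simple_mul_simple_self, mul_one]
    rw [h1, h2]
  have hassoc : w * (s i * s j) = (w * s i) * s j := by rw [mul_assoc]
  have hfix1 : ∀ t : W, σ t = t → t ≠ w * s i * w⁻¹ := by
    intro t htf hc
    rw [hc, hσu1] at htf
    exact hu12 htf.symm
  have hfix2 : ∀ t : W, σ t = t → t ≠ w * s j * w⁻¹ := by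
    intro t htf hc
    rw [hc, hσu2] at htf
    exact hu12 htf
  have hchain : ∀ t : W, cs.IsReflection t → σ t = t →
      (ℓ (t * (w * (s i * s j))) < ℓ (w * (s i * s j)) ↔ ℓ (t * w) < ℓ w) := by
    intro t htr htf
    rw [hassoc]
    have hk2 : ℓ (t * ((w * s i) * s j)) < ℓ ((w * s i) * s j)
        ↔ ℓ (t * (w * s i)) < ℓ (w * s i) :=
      keystep cs htr (w * s i) j (by rw [hconj2]; exact hfix2 t htf)
    rw [hk2]
    exact keystep cs htr w i (hfix1 t htf)
  ext t
  constructor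
  · rintro ⟨htr, hlt, htf⟩
    exact ⟨htr, (hchain t htr htf).mp hlt, htf⟩
  · rintro ⟨htr, hlt, htf⟩
    exact ⟨htr, (hchain t htr htf).mpr hlt, htf⟩

theorem mm_mul_pair_le (w : W) (i j : B) (hij : (s i : W) * s j = s j * s i)
    (hσw : σ w = w) (hσi : σ (s i) = s j) (hσj : σ (s j) = s i) :
    mm cs σ (w * (s i * s j)) ≤ mm cs σ w + 2 := by
  by_cases hss : (s i : W) = s j
  · have h1 : (s i : W) * s j = 1 := by rw [hss, cs.simple_mul_simple_self]
    rw [h1, mul_one]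
    omega
  · have hcc : cc cs σ (w * (s i * s j)) = cc cs σ w := by
      unfold cc
      rw [Sset_mul_pair_eq cs σ w i j hij hss hσw hσi hσj]
    have hl : ℓ (w * (s i * s j)) ≤ ℓ w + 2 := by
      have h1 := cs.length_mul_le w (s i * s j)
      have h2 := cs.length_mul_le (s i) (s j)
      rw [cs.length_simple, cs.length_simple] at h2
      omega
    unfold mm
    omega

theorem mm_mul_pair_exact (w : W) (i j : B) (hij : (s i : W) * s j = s j * s i)
    (hσw : σ w = w) (hσi : σ (s i) = s j) (hσj : σ (s j) = s i)
    (hinc : ℓ (w * (s i * s j)) = ℓ w + 2) :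
    mm cs σ (w * (s i * s j)) = mm cs σ w + 2 := by
  have hss : (s i : W) ≠ s j := by
    intro h
    have h1 : (s i : W) * s j = 1 := by rw [h, cs.simple_mul_simple_self]
    rw [h1, mul_one] at hinc
    omega
  have hcc : cc cs σ (w * (s i * s j)) = cc cs σ w := by
    unfold cc
    rw [Sset_mul_pair_eq cs σ w i j hij hss hσw hσi hσj]
  unfold mm
  omega

end Counting

end SXAux

/-- Let `W` be a finite Weyl group of simply-laced type with longest
element `w₀`, presented by a Coxeter system `cs` over a Coxeter matrix `M`, and let `τ` be a
diagram involution (`M (τ i) (τ j) = M i j`, with `s i` and `s (τ i)` commuting whenever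
`τ i ≠ i`).  Suppose `w₀ = s_{j₁} ⋯ s_{j_N}` is a reduced expression obtained by grouping:
the word `j₁ ⋯ j_N` is the expansion of a word `ω` in which every letter `i` with `τ i ≠ i`
is replaced by the adjacent commuting pair `i, τ i` (and is kept as `i` if `τ i = i`).
Then the corresponding word `ω` in the generators `bs i` (`bs i = s i` or `s i * s (τ i)`)
is a reduced expression of `w₀` in the restricted Weyl group `W_τ` with respect to its
Coxeter generators `{bs i}`: its product is `w₀` and no shorter `bs`-word has product `w₀`. -/
theorem grouped_reduced_word_is_reduced_in_restricted_Weyl_group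
    {B W : Type*} [Group W] [Finite W] [DecidableEq B]
    (M : CoxeterMatrix B) (cs : CoxeterSystem M W)
    (hSL : ∀ i j : B, i ≠ j → M i j = 2 ∨ M i j = 3)  -- simply-laced
    (τ : B → B) (hτ2 : ∀ i, τ (τ i) = i)
    (hτM : ∀ i j, M (τ i) (τ j) = M i j)
    (hcomm : ∀ i, τ i ≠ i → M i (τ i) = 2)
    (w₀ : W) (hlong : ∀ w : W, cs.length w ≤ cs.length w₀)
    (ω : List B)
    (hred : cs.IsReduced (ω.flatMap (fun i => if τ i = i then [i] else [i, τ i])))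
    (hprod : cs.wordProd (ω.flatMap (fun i => if τ i = i then [i] else [i, τ i])) = w₀) :
    ((ω.map (fun i => if τ i = i then cs.simple i else cs.simple i * cs.simple (τ i))).prod
        = w₀)
    ∧ ∀ ω' : List B,
        ((ω'.map (fun i =>
            if τ i = i then cs.simple i else cs.simple i * cs.simple (τ i))).prod = w₀) →
        ω.length ≤ ω'.length := by
  classical
  set F : B → W := fun i => if τ i = i then cs.simple i else cs.simple i * cs.simple (τ i)
    with hF
  set BL : B → List B := fun i => if τ i = i then [i] else [i, τ i] with hBL
  -- the diagram automorphism σ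
  have hlift : M.IsLiftable (fun i => cs.simple (τ i)) := by
    intro i k
    rw [← hτM i k]
    exact cs.simple_mul_simple_pow (τ i) (τ k)
  set σ : W →* W := cs.lift ⟨fun i => cs.simple (τ i), hlift⟩ with hσ
  have hσs : ∀ i, σ (cs.simple i) = cs.simple (τ i) := fun i =>
    cs.lift_apply_simple hlift i
  -- commutation of s i and s (τ i)
  have hcommS : ∀ i, τ i ≠ i →
      cs.simple i * cs.simple (τ i) = cs.simple (τ i) * cs.simple i := by
    intro i h
    have h2 : (cs.simple i * cs.simple (τ i)) ^ M i (τ i) = 1 :=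
      cs.simple_mul_simple_pow i (τ i)
    rw [hcomm i h] at h2
    have hx : (cs.simple i * cs.simple (τ i)) * (cs.simple i * cs.simple (τ i)) = 1 := by
      rw [← pow_two]
      exact h2
    have h3 : cs.simple i * cs.simple (τ i) = (cs.simple i * cs.simple (τ i))⁻¹ :=
      eq_inv_of_mul_eq_one_left hx
    rwa [mul_inv_rev, cs.inv_simple, cs.inv_simple] at h3
  -- basic facts about F and BL
  have hFfix : ∀ i, τ i = i → F i = cs.simple i := by
    intro i h
    simp only [hF, if_pos h]
  have hFpair : ∀ i, τ i ≠ i → F i = cs.simple i * cs.simple (τ i) := by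
    intro i h
    simp only [hF, if_neg h]
  have hBLfix : ∀ i, τ i = i → BL i = [i] := by
    intro i h
    simp only [hBL, if_pos h]
  have hBLpair : ∀ i, τ i ≠ i → BL i = [i, τ i] := by
    intro i h
    simp only [hBL, if_neg h]
  have hFBL : ∀ i, cs.wordProd (BL i) = F i := by
    intro i
    by_cases h : τ i = i
    · rw [hBLfix i h, hFfix i h, CoxeterSystem.wordProd_cons, CoxeterSystem.wordProd_nil,
        mul_one]
    · rw [hBLpair i h, hFpair i h, CoxeterSystem.wordProd_cons, CoxeterSystem.wordProd_cons,
        CoxeterSystem.wordProd_nil, mul_one]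
  have hprodF : ∀ α : List B, (α.map F).prod = cs.wordProd (α.flatMap BL) := by
    intro α
    induction α with
    | nil => simp [CoxeterSystem.wordProd_nil]
    | cons i α ih =>
      rw [List.flatMap_cons, CoxeterSystem.wordProd_append, List.map_cons, List.prod_cons,
        ih, hFBL]
  have hσF : ∀ i, σ (F i) = F i := by
    intro i
    by_cases h : τ i = i
    · rw [hFfix i h, hσs i, h]
    · rw [hFpair i h, map_mul, hσs i, hσs (τ i), hτ2 i, hcommS i h]
  have hσprod : ∀ α : List B, σ ((α.map F).prod) = (α.map F).prod := by
    intro α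
    induction α with
    | nil => simp
    | cons i α ih => rw [List.map_cons, List.prod_cons, map_mul, hσF, ih]
  -- the upper bound for arbitrary words
  have hbound : ∀ α : List B, SXAux.mm cs σ ((α.map F).prod) ≤ 2 * α.length := by
    intro α
    induction α using List.reverseRecOn with
    | nil =>
      simp only [List.map_nil, List.prod_nil, List.length_nil, mul_zero]
      rw [SXAux.mm_one]
    | append_singleton α i ih =>
      rw [List.map_append, List.prod_append, List.map_cons, List.map_nil, List.prod_cons,
        List.prod_nil, mul_one, List.length_append, List.length_cons, List.length_nil]
      by_cases h : τ i = i
      · rw [hFfix i h]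
        have := SXAux.mm_mul_simple_le cs σ ((α.map F).prod) i
        omega
      · rw [hFpair i h]
        have := SXAux.mm_mul_pair_le cs σ ((α.map F).prod) i (τ i) (hcommS i h)
          (hσprod α) (hσs i) (by rw [hσs (τ i), hτ2 i])
        omega
  -- the exact value along prefixes of ω
  have hexact : ∀ α : List B, (∃ γ, ω = α ++ γ) →
      cs.length ((α.map F).prod) = (α.flatMap BL).length
        ∧ SXAux.mm cs σ ((α.map F).prod) = 2 * α.length := by
    intro α
    induction α using List.reverseRecOn with
    | nil =>
      intro _
      constructor
      · simp [cs.length_one]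
      · simp only [List.map_nil, List.prod_nil, List.length_nil, mul_zero]
        rw [SXAux.mm_one]
    | append_singleton α i ih =>
      rintro ⟨γ, hγ⟩
      have hpre : ∃ γ', ω = α ++ γ' := ⟨i :: γ, by rw [hγ, List.append_assoc]; rfl⟩
      obtain ⟨ihl, ihm⟩ := ih hpre
      -- the flatMap of the extended prefix is reduced
      have hsplit : ω.flatMap BL = ((α ++ [i]).flatMap BL) ++ (γ.flatMap BL) := by
        rw [hγ, List.flatMap_append]
      have hredpre : cs.IsReduced ((α ++ [i]).flatMap BL) := by
        have h1 := hred.take (((α ++ [i]).flatMap BL).length)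
        rwa [hsplit, List.take_left] at h1
      have hlenpre : cs.length ((((α ++ [i])).map F).prod)
          = ((α ++ [i]).flatMap BL).length := by
        rw [hprodF]
        exact hredpre
      have hflatlen : ((α ++ [i]).flatMap BL).length
          = (α.flatMap BL).length + (BL i).length := by
        rw [List.flatMap_append]
        simp
      rw [List.map_append, List.prod_append, List.map_cons, List.map_nil, List.prod_cons,
        List.prod_nil, mul_one] at hlenpre ⊢
      rw [List.length_append, List.length_cons, List.length_nil]
      by_cases h : τ i = i
      · have hbl : (BL i).length = 1 := by rw [hBLfix i h]; rfl
        have hinc : cs.length ((α.map F).prod * cs.simple i)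
            = cs.length ((α.map F).prod) + 1 := by
          rw [← hFfix i h, hlenpre, hflatlen, ihl, hbl]
        rw [hFfix i h]
        have hmm := SXAux.mm_mul_simple_exact cs σ ((α.map F).prod) i
          (hσprod α) (by rw [hσs i, h]) hinc
        constructor
        · rw [← hFfix i h]
          exact hlenpre
        · omega
      · have hbl : (BL i).length = 2 := by rw [hBLpair i h]; rfl
        have hinc : cs.length ((α.map F).prod * (cs.simple i * cs.simple (τ i)))
            = cs.length ((α.map F).prod) + 2 := by
          rw [← hFpair i h, hlenpre, hflatlen, ihl, hbl]
        rw [hFpair i h]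
        have hmm := SXAux.mm_mul_pair_exact cs σ ((α.map F).prod) i (τ i) (hcommS i h)
          (hσprod α) (hσs i) (by rw [hσs (τ i), hτ2 i]) hinc
        constructor
        · rw [← hFpair i h]
          exact hlenpre
        · omega
  have hfull := hexact ω ⟨[], by simp⟩
  have part1 : (ω.map F).prod = w₀ := by
    rw [hprodF]
    exact hprod
  refine ⟨part1, ?_⟩
  intro ω' hω'
  have h2 : SXAux.mm cs σ w₀ = 2 * ω.length := by
    rw [← part1]
    exact hfull.2
  have h3 : SXAux.mm cs σ w₀ ≤ 2 * ω'.length := by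
    rw [← hω']
    exact hbound ω'
  omega
end

section
/- Let U^ı_ς be the ı-quantum group with parameters ς = (ς_i) inside the quantum group U, generated by B_i = F_i + ς_i E_{τi} K_i^{-1} and k_j = K_j K_{τj}^{-1}. Then the map sending B_i ↦ a_i B_i and k_i ↦ k_i, where a_i = √(ς_{◇,i}/ς_i) for a second parameter ς_◇, extends (over the field F = Q(v)(a_i : i ∈ I)) to an algebra isomorphism from F ⊗ U^ı_{ς_◇} to F ⊗ U^ı_ς. -/
namespace IQG

/-- Generators of the quantum group: `E i`, `F i`, `K i`, `K i⁻¹`. -/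
inductive QGen (I : Type) : Type
  | E : I → QGen I
  | F : I → QGen I
  | K : I → QGen I
  | Kinv : I → QGen I

variable (FF : Type) [Field FF] (I : Type) [DecidableEq I] (v : FF) (c : I → I → ℤ)

open FreeAlgebra

/-- The defining relations of the simply-laced quantum group `U_v` with generators
`E i, F i, K i, K i⁻¹` (including the quantum Serre relations). -/
inductive QGRel : FreeAlgebra FF (QGen I) → FreeAlgebra FF (QGen I) → Prop
  | KKinv (i : I) : QGRel (ι FF (QGen.K i) * ι FF (QGen.Kinv i)) 1
  | KinvK (i : I) : QGRel (ι FF (QGen.Kinv i) * ι FF (QGen.K i)) 1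
  | KK (i j : I) : QGRel (ι FF (QGen.K i) * ι FF (QGen.K j))
      (ι FF (QGen.K j) * ι FF (QGen.K i))
  | KE (i j : I) : QGRel (ι FF (QGen.K i) * ι FF (QGen.E j))
      ((v ^ (c i j)) • (ι FF (QGen.E j) * ι FF (QGen.K i)))
  | KF (i j : I) : QGRel (ι FF (QGen.K i) * ι FF (QGen.F j))
      ((v ^ (-(c i j))) • (ι FF (QGen.F j) * ι FF (QGen.K i)))
  | EF (i j : I) : QGRel (ι FF (QGen.E i) * ι FF (QGen.F j) -
        ι FF (QGen.F j) * ι FF (QGen.E i))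
      (if i = j then (v - v⁻¹)⁻¹ • (ι FF (QGen.K i) - ι FF (QGen.Kinv i)) else 0)
  | EE0 (i j : I) : c i j = 0 → QGRel (ι FF (QGen.E i) * ι FF (QGen.E j))
      (ι FF (QGen.E j) * ι FF (QGen.E i))
  | FF0 (i j : I) : c i j = 0 → QGRel (ι FF (QGen.F i) * ι FF (QGen.F j))
      (ι FF (QGen.F j) * ι FF (QGen.F i))
  | EE1 (i j : I) : c i j = -1 → QGRel
      (ι FF (QGen.E i) * ι FF (QGen.E i) * ι FF (QGen.E j)
        + ι FF (QGen.E j) * ι FF (QGen.E i) * ι FF (QGen.E i))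
      ((v + v⁻¹) • (ι FF (QGen.E i) * ι FF (QGen.E j) * ι FF (QGen.E i)))
  | FF1 (i j : I) : c i j = -1 → QGRel
      (ι FF (QGen.F i) * ι FF (QGen.F i) * ι FF (QGen.F j)
        + ι FF (QGen.F j) * ι FF (QGen.F i) * ι FF (QGen.F i))
      ((v + v⁻¹) • (ι FF (QGen.F i) * ι FF (QGen.F j) * ι FF (QGen.F i)))

/-- The quantum group `U_v` of the simply-laced Cartan matrix `c`, presented by generators
and relations. -/
def QG : Type := RingQuot (QGRel FF I v c)

instance : Ring (QG FF I v c) := by unfold QG; infer_instance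
instance : Algebra FF (QG FF I v c) := by unfold QG; infer_instance

/-- The generator `E i` of the quantum group. -/
def uE (i : I) : QG FF I v c := RingQuot.mkAlgHom FF (QGRel FF I v c) (ι FF (QGen.E i))
/-- The generator `F i` of the quantum group. -/
def uF (i : I) : QG FF I v c := RingQuot.mkAlgHom FF (QGRel FF I v c) (ι FF (QGen.F i))
/-- The generator `K i` of the quantum group. -/
def uK (i : I) : QG FF I v c := RingQuot.mkAlgHom FF (QGRel FF I v c) (ι FF (QGen.K i))
/-- The generator `K i⁻¹` of the quantum group. -/
def uKinv (i : I) : QG FF I v c := RingQuot.mkAlgHom FF (QGRel FF I v c) (ι FF (QGen.Kinv i))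

variable (τ : I → I)

/-- The generator `B i = F i + ς_i E (τ i) K i⁻¹` of the ı-quantum group with parameter `p`. -/
def uB (p : I → FF) (i : I) : QG FF I v c :=
  uF FF I v c i + p i • (uE FF I v c (τ i) * uKinv FF I v c i)

/-- The Cartan element `k j = K j * K (τ j)⁻¹` of the ı-quantum group. -/
def uk (j : I) : QG FF I v c := uK FF I v c j * uKinv FF I v c (τ j)

/-- The inverse Cartan element `k j⁻¹ = K (τ j) * K j⁻¹`. -/
def ukinv (j : I) : QG FF I v c := uK FF I v c (τ j) * uKinv FF I v c j

/-- The ı-quantum group `U^ı_p` with parameter `p`, as a subalgebra of the quantum group. -/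
def Ui (p : I → FF) : Subalgebra FF (QG FF I v c) :=
  Algebra.adjoin FF
    (Set.range (uB FF I v c τ p) ∪ Set.range (uk FF I v c τ) ∪ Set.range (ukinv FF I v c τ))

/-! ### Auxiliary development: the rescaling automorphism of the quantum group -/

section Aux

/-- The defining relations, as identities in the quantum group. -/
lemma qg_KKinv (i : I) : uK FF I v c i * uKinv FF I v c i = 1 := by
  have h := RingQuot.mkAlgHom_rel FF (QGRel.KKinv (FF := FF) (I := I) (v := v) (c := c) i)
  simp [uK, uKinv, map_mul, map_one] at h ⊢
  exact h

lemma qg_KinvK (i : I) : uKinv FF I v c i * uK FF I v c i = 1 := by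
  have h := RingQuot.mkAlgHom_rel FF (QGRel.KinvK (FF := FF) (I := I) (v := v) (c := c) i)
  simp [uK, uKinv, map_mul, map_one] at h ⊢
  exact h

lemma qg_KK (i j : I) : uK FF I v c i * uK FF I v c j = uK FF I v c j * uK FF I v c i := by
  have h := RingQuot.mkAlgHom_rel FF (QGRel.KK (FF := FF) (I := I) (v := v) (c := c) i j)
  simp [uK, map_mul] at h ⊢
  exact h

lemma qg_KE (i j : I) : uK FF I v c i * uE FF I v c j
    = (v ^ (c i j)) • (uE FF I v c j * uK FF I v c i) := by
  have h := RingQuot.mkAlgHom_rel FF (QGRel.KE (FF := FF) (I := I) (v := v) (c := c) i j)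
  simp [uK, uE, map_mul, map_smul] at h ⊢
  exact h

lemma qg_KF (i j : I) : uK FF I v c i * uF FF I v c j
    = (v ^ (-(c i j))) • (uF FF I v c j * uK FF I v c i) := by
  have h := RingQuot.mkAlgHom_rel FF (QGRel.KF (FF := FF) (I := I) (v := v) (c := c) i j)
  simp [uK, uF, map_mul, map_smul] at h ⊢
  exact h

lemma qg_EF (i j : I) : uE FF I v c i * uF FF I v c j - uF FF I v c j * uE FF I v c i
    = if i = j then (v - v⁻¹)⁻¹ • (uK FF I v c i - uKinv FF I v c i) else 0 := by
  have h := RingQuot.mkAlgHom_rel FF (QGRel.EF (FF := FF) (I := I) (v := v) (c := c) i j)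
  simp [uE, uF, uK, uKinv, map_sub, map_mul, map_smul,
    apply_ite (RingQuot.mkAlgHom FF (QGRel FF I v c))] at h ⊢
  exact h

lemma qg_EE0 (i j : I) (hc : c i j = 0) :
    uE FF I v c i * uE FF I v c j = uE FF I v c j * uE FF I v c i := by
  have h := RingQuot.mkAlgHom_rel FF (QGRel.EE0 (FF := FF) (I := I) (v := v) (c := c) i j hc)
  simp [uE, map_mul] at h ⊢
  exact h

lemma qg_FF0 (i j : I) (hc : c i j = 0) :
    uF FF I v c i * uF FF I v c j = uF FF I v c j * uF FF I v c i := by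
  have h := RingQuot.mkAlgHom_rel FF (QGRel.FF0 (FF := FF) (I := I) (v := v) (c := c) i j hc)
  simp [uF, map_mul] at h ⊢
  exact h

lemma qg_EE1 (i j : I) (hc : c i j = -1) :
    uE FF I v c i * uE FF I v c i * uE FF I v c j
      + uE FF I v c j * uE FF I v c i * uE FF I v c i
    = (v + v⁻¹) • (uE FF I v c i * uE FF I v c j * uE FF I v c i) := by
  have h := RingQuot.mkAlgHom_rel FF (QGRel.EE1 (FF := FF) (I := I) (v := v) (c := c) i j hc)
  simp [uE, map_add, map_mul, map_smul] at h ⊢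
  exact h

lemma qg_FF1 (i j : I) (hc : c i j = -1) :
    uF FF I v c i * uF FF I v c i * uF FF I v c j
      + uF FF I v c j * uF FF I v c i * uF FF I v c i
    = (v + v⁻¹) • (uF FF I v c i * uF FF I v c j * uF FF I v c i) := by
  have h := RingQuot.mkAlgHom_rel FF (QGRel.FF1 (FF := FF) (I := I) (v := v) (c := c) i j hc)
  simp [uF, map_add, map_mul, map_smul] at h ⊢
  exact h

/-- Images of the generators under the rescaling map determined by `b`. -/
def gmap (b : I → FF) : QGen I → QG FF I v c
  | QGen.E i => (b i)⁻¹ • uE FF I v c i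
  | QGen.F i => b i • uF FF I v c i
  | QGen.K i => uK FF I v c i
  | QGen.Kinv i => uKinv FF I v c i

lemma gmap_rel (b : I → FF) (hb : ∀ i, b i ≠ 0) :
    ∀ ⦃x y : FreeAlgebra FF (QGen I)⦄, QGRel FF I v c x y →
      (FreeAlgebra.lift FF (gmap FF I v c b)) x = (FreeAlgebra.lift FF (gmap FF I v c b)) y := by
  intro x y h
  induction h with
  | KKinv i =>
      simp only [map_mul, map_one, FreeAlgebra.lift_ι_apply, gmap]
      exact qg_KKinv FF I v c i
  | KinvK i =>
      simp only [map_mul, map_one, FreeAlgebra.lift_ι_apply, gmap]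
      exact qg_KinvK FF I v c i
  | KK i j =>
      simp only [map_mul, FreeAlgebra.lift_ι_apply, gmap]
      exact qg_KK FF I v c i j
  | KE i j =>
      simp only [map_mul, map_smul, FreeAlgebra.lift_ι_apply, gmap,
        mul_smul_comm, smul_mul_assoc]
      rw [qg_KE FF I v c i j]
      module
  | KF i j =>
      simp only [map_mul, map_smul, FreeAlgebra.lift_ι_apply, gmap,
        mul_smul_comm, smul_mul_assoc]
      rw [qg_KF FF I v c i j]
      module
  | EF i j =>
      have h := qg_EF FF I v c i j
      by_cases hij : i = j
      · subst hij
        rw [if_pos rfl] at h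
        have h' : uE FF I v c i * uF FF I v c i
            = (v - v⁻¹)⁻¹ • (uK FF I v c i - uKinv FF I v c i)
              + uF FF I v c i * uE FF I v c i := by
          rw [← h]; abel
        simp only [eq_self_iff_true, if_true, map_sub, map_mul, map_smul,
          FreeAlgebra.lift_ι_apply, gmap, mul_smul_comm, smul_mul_assoc]
        rw [inv_smul_smul₀ (hb i), smul_smul, mul_inv_cancel₀ (hb i), one_smul, h']
        abel
      · rw [if_neg hij] at h
        have h' : uE FF I v c i * uF FF I v c j = uF FF I v c j * uE FF I v c i := by
          have := sub_eq_zero.mp h; exact this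
        simp only [if_neg hij, map_sub, map_mul, map_zero, FreeAlgebra.lift_ι_apply, gmap,
          mul_smul_comm, smul_mul_assoc]
        rw [h', smul_comm, sub_self]
  | EE0 i j hc =>
      simp only [map_mul, FreeAlgebra.lift_ι_apply, gmap, mul_smul_comm, smul_mul_assoc]
      rw [qg_EE0 FF I v c i j hc]
      module
  | FF0 i j hc =>
      simp only [map_mul, FreeAlgebra.lift_ι_apply, gmap, mul_smul_comm, smul_mul_assoc]
      rw [qg_FF0 FF I v c i j hc]
      module
  | EE1 i j hc =>
      have h' : uE FF I v c i * uE FF I v c i * uE FF I v c j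
          = (v + v⁻¹) • (uE FF I v c i * uE FF I v c j * uE FF I v c i)
            - uE FF I v c j * uE FF I v c i * uE FF I v c i := by
        rw [← qg_EE1 FF I v c i j hc]; abel
      simp only [map_add, map_mul, map_smul, FreeAlgebra.lift_ι_apply, gmap,
        mul_smul_comm, smul_mul_assoc]
      simp only [smul_smul]
      have key : ∀ k1 k2 k3 : FF, k1 = k3 → k2 = (v + v⁻¹) * k1 →
          k1 • (uE FF I v c i * uE FF I v c i * uE FF I v c j) + k3 • (uE FF I v c j * uE FF I v c i * uE FF I v c i) = k2 • (uE FF I v c i * uE FF I v c j * uE FF I v c i) := by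
        rintro k1 k2 k3 rfl rfl
        rw [← smul_add, qg_EE1 FF I v c i j hc, smul_smul, mul_comm]
      exact key _ _ _ (by ring) (by ring)
  | FF1 i j hc =>
      have h' : uF FF I v c i * uF FF I v c i * uF FF I v c j
          = (v + v⁻¹) • (uF FF I v c i * uF FF I v c j * uF FF I v c i)
            - uF FF I v c j * uF FF I v c i * uF FF I v c i := by
        rw [← qg_FF1 FF I v c i j hc]; abel
      simp only [map_add, map_mul, map_smul, FreeAlgebra.lift_ι_apply, gmap,
        mul_smul_comm, smul_mul_assoc]
      simp only [smul_smul]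
      have key : ∀ k1 k2 k3 : FF, k1 = k3 → k2 = (v + v⁻¹) * k1 →
          k1 • (uF FF I v c i * uF FF I v c i * uF FF I v c j) + k3 • (uF FF I v c j * uF FF I v c i * uF FF I v c i) = k2 • (uF FF I v c i * uF FF I v c j * uF FF I v c i) := by
        rintro k1 k2 k3 rfl rfl
        rw [← smul_add, qg_FF1 FF I v c i j hc, smul_smul, mul_comm]
      exact key _ _ _ (by ring) (by ring)

/-- The rescaling endomorphism of the quantum group:
`E i ↦ (b i)⁻¹ • E i`, `F i ↦ b i • F i`, `K`, `K⁻¹` fixed. -/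
noncomputable def scaleHom (b : I → FF) (hb : ∀ i, b i ≠ 0) :
    QG FF I v c →ₐ[FF] QG FF I v c :=
  RingQuot.liftAlgHom FF ⟨FreeAlgebra.lift FF (gmap FF I v c b), gmap_rel FF I v c b hb⟩

lemma scaleHom_uE (b : I → FF) (hb : ∀ i, b i ≠ 0) (i : I) :
    scaleHom FF I v c b hb (uE FF I v c i) = (b i)⁻¹ • uE FF I v c i := by
  refine (RingQuot.liftAlgHom_mkAlgHom_apply FF _ (gmap_rel FF I v c b hb)
    (ι FF (QGen.E i))).trans ?_
  rw [FreeAlgebra.lift_ι_apply]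
  rfl

lemma scaleHom_uF (b : I → FF) (hb : ∀ i, b i ≠ 0) (i : I) :
    scaleHom FF I v c b hb (uF FF I v c i) = b i • uF FF I v c i := by
  refine (RingQuot.liftAlgHom_mkAlgHom_apply FF _ (gmap_rel FF I v c b hb)
    (ι FF (QGen.F i))).trans ?_
  rw [FreeAlgebra.lift_ι_apply]
  rfl

lemma scaleHom_uK (b : I → FF) (hb : ∀ i, b i ≠ 0) (i : I) :
    scaleHom FF I v c b hb (uK FF I v c i) = uK FF I v c i := by
  refine (RingQuot.liftAlgHom_mkAlgHom_apply FF _ (gmap_rel FF I v c b hb)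
    (ι FF (QGen.K i))).trans ?_
  rw [FreeAlgebra.lift_ι_apply]
  rfl

lemma scaleHom_uKinv (b : I → FF) (hb : ∀ i, b i ≠ 0) (i : I) :
    scaleHom FF I v c b hb (uKinv FF I v c i) = uKinv FF I v c i := by
  refine (RingQuot.liftAlgHom_mkAlgHom_apply FF _ (gmap_rel FF I v c b hb)
    (ι FF (QGen.Kinv i))).trans ?_
  rw [FreeAlgebra.lift_ι_apply]
  rfl

lemma qg_hom_ext {B : Type} [Semiring B] [Algebra FF B]
    {f g : QG FF I v c →ₐ[FF] B}
    (h : ∀ x : QGen I,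
      f (RingQuot.mkAlgHom FF (QGRel FF I v c) (ι FF x))
        = g (RingQuot.mkAlgHom FF (QGRel FF I v c) (ι FF x))) : f = g := by
  have hcomp : f.comp (RingQuot.mkAlgHom FF (QGRel FF I v c))
      = g.comp (RingQuot.mkAlgHom FF (QGRel FF I v c)) :=
    FreeAlgebra.hom_ext (funext fun x => h x)
  apply AlgHom.ext
  intro x
  obtain ⟨y, rfl⟩ := RingQuot.mkAlgHom_surjective FF (QGRel FF I v c) x
  exact congrArg (fun φ => φ y) hcomp

lemma scaleHom_comp (b : I → FF) (hb : ∀ i, b i ≠ 0) :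
    (scaleHom FF I v c b hb).comp
        (scaleHom FF I v c (fun i => (b i)⁻¹) (fun i => inv_ne_zero (hb i)))
      = AlgHom.id FF (QG FF I v c) := by
  apply qg_hom_ext
  intro x
  cases x with
  | E i =>
      show scaleHom FF I v c b hb
        (scaleHom FF I v c _ _ (uE FF I v c i)) = uE FF I v c i
      rw [scaleHom_uE, map_smul, scaleHom_uE, inv_inv, smul_smul,
        mul_inv_cancel₀ (hb i), one_smul]
  | F i =>
      show scaleHom FF I v c b hb
        (scaleHom FF I v c _ _ (uF FF I v c i)) = uF FF I v c i
      rw [scaleHom_uF, map_smul, scaleHom_uF, smul_smul,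
        inv_mul_cancel₀ (hb i), one_smul]
  | K i =>
      show scaleHom FF I v c b hb
        (scaleHom FF I v c _ _ (uK FF I v c i)) = uK FF I v c i
      rw [scaleHom_uK, scaleHom_uK]
  | Kinv i =>
      show scaleHom FF I v c b hb
        (scaleHom FF I v c _ _ (uKinv FF I v c i)) = uKinv FF I v c i
      rw [scaleHom_uKinv, scaleHom_uKinv]

/-- The rescaling automorphism of the quantum group. -/
noncomputable def scaleEquiv (b : I → FF) (hb : ∀ i, b i ≠ 0) :
    QG FF I v c ≃ₐ[FF] QG FF I v c :=
  AlgEquiv.ofAlgHom (scaleHom FF I v c b hb)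
    (scaleHom FF I v c (fun i => (b i)⁻¹) (fun i => inv_ne_zero (hb i)))
    (scaleHom_comp FF I v c b hb)
    (by
      have := scaleHom_comp FF I v c (fun i => (b i)⁻¹) (fun i => inv_ne_zero (hb i))
      simpa [inv_inv] using this)

end Aux

/-- Let `U^ı_ς` be the ı-quantum group with parameters `ς = (ς i)` inside
the quantum group `U`, generated by `B i = F i + ς i E (τ i) K i⁻¹` and
`k j = K j K (τ j)⁻¹`.  Then, over a field containing the square roots `a i` with
`a i ^ 2 = ς◇ i / ς i` for a second parameter `ς◇`, the map sending `B i ↦ a i • B i` and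
`k i ↦ k i` extends to an algebra isomorphism `U^ı_{ς◇} ≃ U^ı_ς`. -/
theorem rescaling_isomorphism_of_iQuantumGroups
    (hv : v ≠ 0) (hv2 : v * v ≠ 1)
    (hcsym : ∀ i j, c i j = c j i) (hcii : ∀ i, c i i = 2)
    (hcoff : ∀ i j, i ≠ j → c i j = 0 ∨ c i j = -1)
    (hτ : ∀ i, τ (τ i) = i) (hcττ : ∀ i j, c (τ i) (τ j) = c i j)
    (hciτ : ∀ i, c i (τ i) = 0)
    (ς ςd a : I → FF)
    (hς0 : ∀ i, ς i ≠ 0) (hςd0 : ∀ i, ςd i ≠ 0) (ha0 : ∀ i, a i ≠ 0)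
    (hςτ : ∀ i, ς (τ i) = ς i) (hςdτ : ∀ i, ςd (τ i) = ςd i)
    (haτ : ∀ i, a (τ i) = a i)
    (ha : ∀ i, a i * a i * ς i = ςd i) :
    ∃ φ : (Ui FF I v c τ ςd) ≃ₐ[FF] (Ui FF I v c τ ς),
      (∀ i : I, ∀ x : Ui FF I v c τ ςd,
        (x : QG FF I v c) = uB FF I v c τ ςd i →
          ((φ x : Ui FF I v c τ ς) : QG FF I v c) = a i • uB FF I v c τ ς i) ∧
      (∀ j : I, ∀ x : Ui FF I v c τ ςd,
        ((x : QG FF I v c) = uk FF I v c τ j →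
          ((φ x : Ui FF I v c τ ς) : QG FF I v c) = uk FF I v c τ j) ∧
        ((x : QG FF I v c) = ukinv FF I v c τ j →
          ((φ x : Ui FF I v c τ ς) : QG FF I v c) = ukinv FF I v c τ j)) := by
  set Φ := scaleEquiv FF I v c a ha0 with hΦ
  have hΦapp : ∀ x : QG FF I v c, Φ x = scaleHom FF I v c a ha0 x := fun x => rfl
  -- action on the generators
  have hB : ∀ i, scaleHom FF I v c a ha0 (uB FF I v c τ ςd i) = a i • uB FF I v c τ ς i := by
    intro i
    have hsc : ςd i * (a i)⁻¹ = a i * ς i := by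
      rw [← ha i, mul_right_comm, mul_inv_cancel_right₀ (ha0 i)]
    rw [uB, uB, map_add, map_smul, map_mul, scaleHom_uF, scaleHom_uE, scaleHom_uKinv, haτ,
      smul_mul_assoc, smul_smul, hsc, smul_add, smul_smul]
  have hk : ∀ j, scaleHom FF I v c a ha0 (uk FF I v c τ j) = uk FF I v c τ j := by
    intro j
    rw [uk, map_mul, scaleHom_uK, scaleHom_uKinv]
  have hkinv : ∀ j, scaleHom FF I v c a ha0 (ukinv FF I v c τ j) = ukinv FF I v c τ j := by
    intro j
    rw [ukinv, map_mul, scaleHom_uK, scaleHom_uKinv]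
  -- the automorphism maps `U^ı_{ςd}` onto `U^ı_ς`
  have hmap : (Ui FF I v c τ ςd).map (Φ : QG FF I v c →ₐ[FF] QG FF I v c)
      = Ui FF I v c τ ς := by
    rw [Ui, Ui, AlgHom.map_adjoin]
    apply le_antisymm
    · apply Algebra.adjoin_le
      rintro _ ⟨x, hx, rfl⟩
      have : ∀ y : QG FF I v c, (Φ : QG FF I v c →ₐ[FF] QG FF I v c) y
          = scaleHom FF I v c a ha0 y := fun y => rfl
      rcases hx with (⟨i, rfl⟩ | ⟨j, rfl⟩) | ⟨j, rfl⟩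
      · rw [this, hB i]
        refine SetLike.mem_coe.2 (Subalgebra.smul_mem _ (Algebra.subset_adjoin ?_) (a i))
        exact Or.inl (Or.inl ⟨i, rfl⟩)
      · rw [this, hk j]
        exact Algebra.subset_adjoin (Or.inl (Or.inr ⟨j, rfl⟩))
      · rw [this, hkinv j]
        exact Algebra.subset_adjoin (Or.inr ⟨j, rfl⟩)
    · apply Algebra.adjoin_le
      rintro x hx
      rcases hx with (⟨i, rfl⟩ | ⟨j, rfl⟩) | ⟨j, rfl⟩
      · have hmem : a i • uB FF I v c τ ς i
            ∈ (Φ : QG FF I v c →ₐ[FF] QG FF I v c) ''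
              (Set.range (uB FF I v c τ ςd) ∪ Set.range (uk FF I v c τ)
                ∪ Set.range (ukinv FF I v c τ)) :=
          ⟨uB FF I v c τ ςd i, Or.inl (Or.inl ⟨i, rfl⟩), hB i⟩
        have : uB FF I v c τ ς i = (a i)⁻¹ • (a i • uB FF I v c τ ς i) :=
          (inv_smul_smul₀ (ha0 i) _).symm
        rw [this]
        exact Subalgebra.smul_mem _ (Algebra.subset_adjoin hmem) _
      · exact Algebra.subset_adjoin
          ⟨uk FF I v c τ j, Or.inl (Or.inr ⟨j, rfl⟩), hk j⟩
      · exact Algebra.subset_adjoin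
          ⟨ukinv FF I v c τ j, Or.inr ⟨j, rfl⟩, hkinv j⟩
  refine ⟨(AlgEquiv.subalgebraMap Φ (Ui FF I v c τ ςd)).trans
      (Subalgebra.equivOfEq _ _ hmap), ?_, ?_⟩
  · intro i x hx
    show ((AlgEquiv.subalgebraMap Φ (Ui FF I v c τ ςd) x : _) : QG FF I v c)
      = a i • uB FF I v c τ ς i
    rw [AlgEquiv.subalgebraMap_apply_coe, hx]
    exact hB i
  · intro j x
    constructor
    · intro hx
      show ((AlgEquiv.subalgebraMap Φ (Ui FF I v c τ ςd) x : _) : QG FF I v c)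
        = uk FF I v c τ j
      rw [AlgEquiv.subalgebraMap_apply_coe, hx]
      exact hk j
    · intro hx
      show ((AlgEquiv.subalgebraMap Φ (Ui FF I v c τ ςd) x : _) : QG FF I v c)
        = ukinv FF I v c τ j
      rw [AlgEquiv.subalgebraMap_apply_coe, hx]
      exact hkinv j

end IQG
end
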